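/- arXiv:1110.3699 — 6 statements merged into one kernel-verified Lean document; each statement's English description precedes it below -/
import Mathlib

section
/- Let L be a finite-dimensional solvable Lie algebra over a field, and let A be a minimal ideal of L with C_L(A) = A (A is self-centralising). Then A is abelian and A has a complement in L, i.e. there is a subalgebra M with L = A ⊕ M (vector space direct sum) and A ∩ M = 0. -/
set_option maxHeartbeats 1000000 in
set_option synthInstance.maxHeartbeats 400000 in
lemma aux_solver {F V : Type*} [Field F] [AddCommGroup V] [Module F V] [FiniteDimensional F V]
    (S : Set (Module.End F V)) (hcomm : ∀ f ∈ S, ∀ g ∈ S, f * g = g * f)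
    (hspan : ∀ v : V, v ∈ Submodule.span F {u : V | ∃ f ∈ S, ∃ w : V, f w = u}) :
    ∃ (n : ℕ) (f T : Fin n → Module.End F V),
      (∀ i, f i ∈ S) ∧ (∀ i, ∀ g ∈ S, g * T i = T i * g) ∧
      (∀ v : V, (∑ i, T i (f i v)) = v) := by
  classical
  set R := Algebra.adjoin F S with hR
  letI : CommRing R := Algebra.adjoinCommRingOfComm F hcomm
  have hsmul : ∀ (r : R) (v : V), r • v = (r : Module.End F V) v := fun r v => rfl
  letI : IsScalarTower F R V := by
    constructor
    intro k r v
    show ((k • r : R) : Module.End F V) v = k • ((r : Module.End F V) v)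
    rw [SetLike.val_smul, LinearMap.smul_apply]
  letI : Module.Finite R V := Module.Finite.of_restrictScalars_finite F R V
  set I : Ideal R := Ideal.span {r : R | (r : Module.End F V) ∈ S} with hI
  have hIV : (⊤ : Submodule R V) ≤ I • ⊤ := by
    intro v _
    have h1 : Submodule.span F {u : V | ∃ f ∈ S, ∃ w : V, f w = u}
        ≤ Submodule.restrictScalars F (I • (⊤ : Submodule R V)) := by
      rw [Submodule.span_le]
      rintro u ⟨f, hf, w, rfl⟩
      show f w ∈ I • (⊤ : Submodule R V)
      have h0 : f w = (⟨f, Algebra.subset_adjoin hf⟩ : R) • w := rfl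
      rw [h0]
      exact Submodule.smul_mem_smul (Ideal.subset_span hf) trivial
    exact h1 (hspan v)
  obtain ⟨r, hr1, hr2⟩ :=
    Submodule.exists_sub_one_mem_and_smul_eq_zero_of_fg_of_le_smul I ⊤
      (Module.finite_def.mp inferInstance) hIV
  set r₀ : R := 1 - r with hr₀def
  have hr₀I : r₀ ∈ I := by
    have := I.neg_mem hr1
    simpa [hr₀def, neg_sub] using this
  have hr₀ : ∀ v : V, (r₀ : Module.End F V) v = v := by
    intro v
    have h2 := hr2 v trivial
    have : r₀ • v = v := by
      rw [hr₀def, sub_smul, one_smul, h2, sub_zero]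
    simpa [hsmul] using this
  have hrep : r₀ ∈ Submodule.span R {r : R | (r : Module.End F V) ∈ S} := hr₀I
  obtain ⟨n, cf, g, hsum⟩ := Submodule.mem_span_set'.mp hrep
  refine ⟨n, fun i => (((g i : R) : Module.End F V)), fun i => ((cf i : R) : Module.End F V),
    ?_, ?_, ?_⟩
  · intro i
    exact (g i).2
  · have hcent : ∀ (r : R), ∀ g ∈ S, g * (r : Module.End F V) = (r : Module.End F V) * g := by
      rintro ⟨x, hx⟩ g hg
      induction hx using Algebra.adjoin_induction with
      | mem y hy => exact hcomm g hg y hy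
      | algebraMap k => exact (Algebra.commutes k g).symm
      | add y z hy hz hy' hz' => simp only [mul_add, add_mul, hy', hz']
      | mul y z hy hz hy' hz' => rw [← mul_assoc, hy', mul_assoc, hz', mul_assoc]
    intro i g hg
    exact hcent _ g hg
  · intro v
    have h3 : ∀ i : Fin n, ((cf i : R) : Module.End F V) (((g i : R) : Module.End F V) v)
        = (((cf i • (g i : R) : R) : Module.End F V)) v := by
      intro i
      rw [smul_eq_mul]
      rfl
    calc (∑ i, ((cf i : R) : Module.End F V) (((g i : R) : Module.End F V) v))
        = ∑ i, (((cf i • (g i : R) : R) : Module.End F V)) v := by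
          simp only [h3]
      _ = ((r₀ : R) : Module.End F V) v := by
          have h5 : ((((∑ i, cf i • (g i : R)) : R) : Module.End F V)) v
              = ∑ i, (((cf i • (g i : R) : R) : Module.End F V)) v := by
            rw [show (((∑ i, cf i • (g i : R) : R) : Module.End F V))
                = R.val (∑ i, cf i • (g i : R)) from rfl, map_sum, LinearMap.sum_apply]
            rfl
          rw [← h5, hsum]
      _ = v := hr₀ v


set_option maxHeartbeats 1000000 in
/-- If `A` is a self-centralising minimal ideal of a finite-dimensional solvable Lie algebra
`L`, then `A` is abelian and `A` is complemented in `L` by a subalgebra `M`. -/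
theorem minimal_selfCentralising_ideal_is_complemented (F : Type*) [Field F]
    (L : Type*) [LieRing L] [LieAlgebra F L] [FiniteDimensional F L]
    [LieAlgebra.IsSolvable L]
    (A : LieIdeal F L) (hA : IsAtom A)
    (hself : ∀ x : L, (∀ a ∈ A, ⁅x, a⁆ = 0) ↔ x ∈ A) :
    (∀ a ∈ A, ∀ b ∈ A, ⁅a, b⁆ = 0) ∧
    ∃ M : LieSubalgebra F L,
      (∀ x : L, ∃ a ∈ A, ∃ m ∈ M, x = a + m) ∧
      (∀ x : L, x ∈ A → x ∈ M → x = 0) := by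
  classical
  have habel : ∀ a ∈ A, ∀ b ∈ A, ⁅a, b⁆ = 0 := fun a ha b hb => (hself a).mpr ha b hb
  refine ⟨habel, ?_⟩
  by_cases htop : A = ⊤
  · refine ⟨⊥, fun x => ⟨x, by rw [htop]; trivial, 0, (⊥ : LieSubalgebra F L).zero_mem, by abel⟩,
      fun x _ hx => by simpa using hx⟩
  -- Choose B, an ideal minimal among those strictly containing A
  obtain ⟨B, hAB, hBmin⟩ : ∃ B : LieIdeal F L, A < B ∧ ∀ C : LieIdeal F L, A < C → ¬ C < B := by
    have hwf := (LieSubmodule.wellFoundedLT_of_isArtinian F L L).wf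
    obtain ⟨B, hB1, hB2⟩ := hwf.has_min {C : LieIdeal F L | A < C}
      ⟨⊤, lt_top_iff_ne_top.mpr htop⟩
    exact ⟨B, hB1, fun C hC hCB => hB2 C hC hCB⟩
  have hBnotA : ¬ B ≤ A := fun h => absurd (le_antisymm h hAB.le) (ne_of_gt hAB)
  -- (P1) [B,B] ≤ A
  have hBBA : ⁅B, B⁆ ≤ A := by
    by_contra hne
    have hDB : A ⊔ ⁅B, B⁆ ≤ B := sup_le hAB.le (LieSubmodule.lie_le_left B B)
    have hD : A ⊔ ⁅B, B⁆ = B := by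
      have h1 : A < A ⊔ ⁅B, B⁆ := by
        rcases lt_or_eq_of_le (le_sup_left : A ≤ A ⊔ ⁅B, B⁆) with h | h
        · exact h
        · exact absurd (le_trans le_sup_right h.symm.le) hne
      rcases lt_or_eq_of_le hDB with h | h
      · exact absurd h (hBmin _ h1)
      · exact h
    have hk : ∀ k, B ≤ A ⊔ LieAlgebra.derivedSeriesOfIdeal F L k B := by
      intro k
      induction k with
      | zero => rw [LieAlgebra.derivedSeriesOfIdeal_zero]; exact le_sup_right
      | succ k ih =>
        set Dk := LieAlgebra.derivedSeriesOfIdeal F L k B with hDk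
        have h1 : ⁅B, B⁆ ≤ ⁅A ⊔ Dk, A ⊔ Dk⁆ := LieSubmodule.mono_lie ih ih
        have h2 : ⁅A ⊔ Dk, A ⊔ Dk⁆ ≤ A ⊔ ⁅Dk, Dk⁆ := by
          rw [LieSubmodule.sup_lie, LieSubmodule.lie_sup, LieSubmodule.lie_sup]
          refine sup_le (sup_le ?_ ?_) (sup_le ?_ ?_)
          · exact (LieSubmodule.lie_le_left A A).trans le_sup_left
          · exact (LieSubmodule.lie_le_left A Dk).trans le_sup_left
          · exact (LieSubmodule.lie_le_right A Dk).trans le_sup_left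
          · exact le_sup_right
        calc B = A ⊔ ⁅B, B⁆ := hD.symm
          _ ≤ A ⊔ (A ⊔ ⁅Dk, Dk⁆) := sup_le_sup_left (h1.trans h2) A
          _ = A ⊔ ⁅Dk, Dk⁆ := by rw [← sup_assoc, sup_idem]
          _ = A ⊔ LieAlgebra.derivedSeriesOfIdeal F L (k + 1) B := by
            rw [LieAlgebra.derivedSeriesOfIdeal_succ]
    obtain ⟨k0, hk0⟩ := LieAlgebra.IsSolvable.solvable F L
    have hmono : LieAlgebra.derivedSeriesOfIdeal F L k0 B ≤ LieAlgebra.derivedSeries F L k0 := by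
      rw [LieAlgebra.derivedSeries_def]
      exact LieAlgebra.derivedSeriesOfIdeal_mono le_top k0
    have : B ≤ A := by
      have := hk k0
      rw [hk0] at hmono
      rwa [le_bot_iff.mp hmono, sup_bot_eq] at this
    exact hBnotA this
  have hBBmem : ∀ x ∈ B, ∀ y ∈ B, ⁅x, y⁆ ∈ A :=
    fun x hx y hy => hBBA (LieSubmodule.lie_mem_lie hx hy)
  -- (P2) [B,A] = A
  have hBAA : ⁅B, A⁆ = A := by
    rcases hA.le_iff.mp (LieSubmodule.lie_le_right A B) with h0 | h
    · exfalso
      apply hBnotA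
      intro b hb
      refine (hself b).mp fun a ha => ?_
      have : ⁅b, a⁆ ∈ ⁅B, A⁆ := LieSubmodule.lie_mem_lie hb ha
      rw [h0] at this
      exact (LieSubmodule.mem_bot _).mp this
    · exact h
  have hAspan : A.toSubmodule =
      Submodule.span F {m : L | ∃ x ∈ B, ∃ n ∈ A, ⁅x, n⁆ = m} := by
    conv_lhs => rw [← hBAA]
    exact LieSubmodule.lieIdeal_oper_eq_linear_span' (N := A) (I := B)
  -- linear complement X₀ of A inside B
  obtain ⟨X₀, hX₀B, hdisj, hsup⟩ :
      ∃ X₀ : Submodule F L, X₀ ≤ B.toSubmodule ∧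
        (∀ x : L, x ∈ A → x ∈ X₀ → x = 0) ∧
        (∀ b ∈ B, ∃ a ∈ A, ∃ x ∈ X₀, b = a + x) := by
    obtain ⟨q, hq⟩ := Submodule.exists_isCompl
      (Submodule.comap B.toSubmodule.subtype A.toSubmodule)
    refine ⟨q.map B.toSubmodule.subtype, Submodule.map_subtype_le _ _, ?_, ?_⟩
    · rintro x hxA ⟨y, hy, rfl⟩
      have hyp : y ∈ Submodule.comap B.toSubmodule.subtype A.toSubmodule := hxA
      have : y ∈ (⊥ : Submodule F B.toSubmodule) := by
        rw [← hq.inf_eq_bot]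
        exact ⟨hyp, hy⟩
      rw [Submodule.mem_bot] at this
      rw [this]
      rfl
    · intro b hb
      have : (⟨b, hb⟩ : B.toSubmodule) ∈
          (Submodule.comap B.toSubmodule.subtype A.toSubmodule) ⊔ q := by
        rw [hq.sup_eq_top]; trivial
      obtain ⟨y, hy, z, hz, hyz⟩ := Submodule.mem_sup.mp this
      refine ⟨y.val, hy, z.val, Submodule.mem_map_of_mem hz, ?_⟩
      have := congrArg (Subtype.val) hyz
      simpa using this.symm
  -- the action of L on A
  set s := LieModule.toEnd F L A with hs
  have hsval : ∀ (x : L) (v : A), ((s x v : A) : L) = ⁅x, (v : L)⁆ :=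
    fun x v => rfl
  have hs0 : ∀ a ∈ A, s a = 0 := by
    intro a ha
    ext v
    have h1 := hsval a v
    rw [habel a ha v.val v.2] at h1
    simpa using congrArg Subtype.val (Subtype.ext h1 : s a v = ⟨0, A.toSubmodule.zero_mem⟩)
  letI : FiniteDimensional F A := inferInstanceAs (FiniteDimensional F A.toSubmodule)
  set S : Set (Module.End F A) := {e | ∃ x ∈ X₀, e = s x} with hS
  have hsmemS : ∀ x ∈ X₀, s x ∈ S := fun x hx => ⟨x, hx, rfl⟩
  have hScomm : ∀ f ∈ S, ∀ g ∈ S, f * g = g * f := by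
    rintro f ⟨x, hx, rfl⟩ g ⟨y, hy, rfl⟩
    have h1 : s ⁅x, y⁆ = 0 := hs0 _ (hBBmem x (hX₀B hx) y (hX₀B hy))
    have h2 : s ⁅x, y⁆ = s x * s y - s y * s x := by
      letI : LieRing (Module.End F A) := LieRing.ofAssociativeRing
      exact LieHom.map_lie s x y
    rw [h2] at h1
    linear_combination (norm := module) h1
  have hSspan : ∀ v : A, v ∈ Submodule.span F {u : A | ∃ f ∈ S, ∃ w : A, f w = u} := by
    intro v
    set G : Set A := {u : A | ∃ f ∈ S, ∃ w : A, f w = u} with hG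
    have hT : A.toSubmodule ≤ (Submodule.span F G).map A.toSubmodule.subtype := by
      refine le_trans (le_of_eq hAspan) ?_
      rw [Submodule.span_le]
      rintro m ⟨x, hxB, nval, hnA, rfl⟩
      obtain ⟨a, ha, x₀, hx₀, rfl⟩ := hsup x hxB
      have hz : ⁅a + x₀, nval⁆ = ⁅x₀, nval⁆ := by
        rw [add_lie, habel a ha nval hnA, zero_add]
      rw [hz]
      have hu : (s x₀ ⟨nval, hnA⟩ : A) ∈ Submodule.span F G :=
        Submodule.subset_span ⟨s x₀, hsmemS x₀ hx₀, ⟨nval, hnA⟩, rfl⟩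
      exact ⟨s x₀ ⟨nval, hnA⟩, hu, (hsval x₀ ⟨nval, hnA⟩)⟩
    obtain ⟨w, hw, hwv⟩ := hT v.2
    have : w = v := Subtype.ext hwv
    rwa [this] at hw
  obtain ⟨n, f, T, hfS, hTcomm, hTf⟩ := aux_solver S hScomm hSspan
  set xi : Fin n → L := fun i => (hfS i).choose with hxi
  have hxiX : ∀ i, xi i ∈ X₀ := fun i => (hfS i).choose_spec.1
  have hxiB : ∀ i, xi i ∈ B := fun i => hX₀B (hxiX i)
  have hfi : ∀ i, f i = s (xi i) := fun i => (hfS i).choose_spec.2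
  -- the correction maps
  set m : Fin n → (X₀ →ₗ[F] A) := fun i =>
    { toFun := fun y => ⟨⁅xi i, (y : L)⁆, hBBmem _ (hxiB i) _ (hX₀B y.2)⟩
      map_add' := fun y z => by apply Subtype.ext; simp [lie_add]
      map_smul' := fun c y => by apply Subtype.ext; simp [lie_smul] } with hm
  have hmval : ∀ (i : Fin n) (y : X₀), ((m i y : A) : L) = ⁅xi i, (y : L)⁆ := fun i y => rfl
  set ν : X₀ →ₗ[F] A := ∑ i, (T i) ∘ₗ (m i) with hνdef
  have hν : ∀ y : X₀, ν y = ∑ i, T i (m i y) := by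
    intro y
    rw [hνdef, LinearMap.sum_apply]
    simp [LinearMap.comp_apply]
  set φ : X₀ →ₗ[F] L :=
    { toFun := fun y => (y : L) - ((ν y : A) : L)
      map_add' := fun y z => by
        simp only [Submodule.coe_add, map_add]
        push_cast
        abel
      map_smul' := fun c y => by
        simp only [Submodule.coe_smul, map_smul, RingHom.id_apply]
        push_cast
        module } with hφdef
  have hφ : ∀ y : X₀, φ y = (y : L) - ((ν y : A) : L) := fun y => rfl
  set X : Submodule F L := LinearMap.range φ with hX
  have hφB : ∀ y : X₀, φ y ∈ B := fun y =>
    B.toSubmodule.sub_mem (hX₀B y.2) (hAB.le (ν y).2)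
  have hsφ : ∀ y : X₀, s (φ y) = s (y : L) := by
    intro y
    rw [hφ y, map_sub, hs0 _ (ν y).2, sub_zero]
  -- the Jacobi identity in terms of s
  have hjac : ∀ (y x x' : L) (hxx' : ⁅x, x'⁆ ∈ A) (hyx : ⁅y, x⁆ ∈ A) (hyx' : ⁅y, x'⁆ ∈ A),
      s y ⟨⁅x, x'⁆, hxx'⟩ = s x ⟨⁅y, x'⁆, hyx'⟩ - s x' ⟨⁅y, x⁆, hyx⟩ := by
    intro y x x' hxx' hyx hyx'
    apply Subtype.ext
    push_cast [hsval]
    rw [leibniz_lie y x x', ← lie_skew x' ⁅y, x⁆]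
    abel
  -- key identity: the graph of -ν over X₀ is an abelian subalgebra
  have hspec2 : ∀ y y' : X₀,
      s (y : L) (ν y') - s (y' : L) (ν y) = ⟨⁅(y : L), (y' : L)⁆, hBBmem _ (hX₀B y.2) _ (hX₀B y'.2)⟩ := by
    intro y y'
    have h1 : ∀ i : Fin n, s (y : L) (T i (m i y')) - s (y' : L) (T i (m i y))
        = T i (f i ⟨⁅(y : L), (y' : L)⁆, hBBmem _ (hX₀B y.2) _ (hX₀B y'.2)⟩) := by
      intro i
      have hTy : s (y : L) * T i = T i * s (y : L) := hTcomm i _ (hsmemS _ y.2)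
      have hTy' : s (y' : L) * T i = T i * s (y' : L) := hTcomm i _ (hsmemS _ y'.2)
      have e1 : s (y : L) (T i (m i y')) = T i (s (y : L) (m i y')) := by
        have := congrFun (congrArg DFunLike.coe hTy) (m i y')
        simpa [Module.End.mul_apply] using this
      have e2 : s (y' : L) (T i (m i y)) = T i (s (y' : L) (m i y)) := by
        have := congrFun (congrArg DFunLike.coe hTy') (m i y)
        simpa [Module.End.mul_apply] using this
      rw [e1, e2, ← map_sub, hfi i]
      congr 1
      have hj := hjac (xi i) (y : L) (y' : L) (hBBmem _ (hX₀B y.2) _ (hX₀B y'.2))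
        (hBBmem _ (hxiB i) _ (hX₀B y.2)) (hBBmem _ (hxiB i) _ (hX₀B y'.2))
      rw [hj]
      rfl
    calc s (y : L) (ν y') - s (y' : L) (ν y)
        = ∑ i, (s (y : L) (T i (m i y')) - s (y' : L) (T i (m i y))) := by
          rw [hν, hν, map_sum, map_sum, Finset.sum_sub_distrib]
      _ = ∑ i, T i (f i ⟨⁅(y : L), (y' : L)⁆, hBBmem _ (hX₀B y.2) _ (hX₀B y'.2)⟩) := by
          exact Finset.sum_congr rfl fun i _ => h1 i
      _ = _ := hTf _
  have hXX : ∀ y y' : X₀, ⁅φ y, φ y'⁆ = 0 := by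
    intro y y'
    have expand : ⁅φ y, φ y'⁆ = ⁅(y : L), (y' : L)⁆
        - ((s (y : L) (ν y') : A) : L) + ((s (y' : L) (ν y) : A) : L) := by
      rw [hφ y, hφ y', sub_lie, lie_sub, lie_sub, habel _ (ν y).2 _ (ν y').2,
        ← lie_skew ((ν y : A) : L) ((y' : L)), hsval, hsval]
      abel
    have hv := congrArg (fun (w : A) => (w : L)) (hspec2 y y')
    simp only [AddSubgroupClass.coe_sub] at hv
    rw [expand]
    rw [← hv]
    abel
  have hAX : ∀ v : L, v ∈ A → v ∈ X → v = 0 := by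
    rintro v hvA ⟨y, rfl⟩
    have hyA : (y : L) ∈ A := by
      have : (y : L) = φ y + ((ν y : A) : L) := by rw [hφ]; abel
      rw [this]
      exact A.toSubmodule.add_mem hvA (ν y).2
    have : (y : L) = 0 := hdisj _ hyA y.2
    rw [hφ, this]
    have hy0 : y = 0 := Subtype.ext this
    rw [hy0]
    simp
  -- the complement M: the normaliser of X
  set Mmod : Submodule F L :=
    { carrier := {l : L | ∀ v ∈ X, ⁅l, v⁆ ∈ X}
      zero_mem' := fun v _ => by rw [zero_lie]; exact X.zero_mem
      add_mem' := fun {a b} ha hb v hv => by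
        rw [add_lie]; exact X.add_mem (ha v hv) (hb v hv)
      smul_mem' := fun c a ha v hv => by
        rw [smul_lie]; exact X.smul_mem c (ha v hv) } with hMmod
  have hMmodmem : ∀ l : L, l ∈ Mmod ↔ ∀ v ∈ X, ⁅l, v⁆ ∈ X := fun l => Iff.rfl
  set M : LieSubalgebra F L :=
    { Mmod with
      lie_mem' := by
        intro a b ha hb
        intro v hv
        rw [lie_lie]
        exact X.sub_mem (ha _ (hb v hv)) (hb _ (ha v hv)) } with hM
  have hMmem : ∀ l : L, l ∈ M ↔ ∀ v ∈ X, ⁅l, v⁆ ∈ X := fun l => Iff.rfl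
  -- surjectivity : L = A + M
  have hsurj : ∀ l : L, ∃ a : A, l + (a : L) ∈ M := by
    intro l
    have hchoice : ∀ y : X₀, ∃ (a : A) (x : X₀), ⁅l, φ y⁆ = (a : L) + φ x := by
      intro y
      obtain ⟨a', ha', x', hx', heq⟩ := hsup _ (B.lie_mem (hφB y))
      refine ⟨⟨a', ha'⟩ + ν ⟨x', hx'⟩, ⟨x', hx'⟩, ?_⟩
      rw [heq, hφ]
      push_cast
      abel
    choose ca cx hdec using hchoice
    have hcoc : ∀ y y' : X₀, s (y : L) (ca y') = s (y' : L) (ca y) := by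
      intro y y'
      have h0 : ⁅l, ⁅φ y, φ y'⁆⁆ = 0 := by rw [hXX]; exact lie_zero l
      rw [leibniz_lie] at h0
      have e1 : ⁅⁅l, φ y⁆, φ y'⁆ = -((s (y' : L) (ca y) : A) : L) := by
        rw [hdec y, add_lie, hXX, add_zero, ← lie_skew ((ca y : A) : L) (φ y'),
          ← hsval (φ y') (ca y), hsφ]
      have e2 : ⁅φ y, ⁅l, φ y'⁆⁆ = ((s (y : L) (ca y') : A) : L) := by
        rw [hdec y', lie_add, hXX, add_zero, ← hsval (φ y) (ca y'), hsφ]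
      rw [e1, e2] at h0
      apply Subtype.ext
      have := sub_eq_zero.mpr (neg_add_eq_zero.mp h0)
      exact (neg_add_eq_zero.mp h0).symm ▸ rfl
    set a : A := ∑ i, T i (ca ⟨xi i, hxiX i⟩) with ha
    have hkey : ∀ y : X₀, s (y : L) a = ca y := by
      intro y
      rw [ha, map_sum]
      have h1 : ∀ i : Fin n, s (y : L) (T i (ca ⟨xi i, hxiX i⟩)) = T i (f i (ca y)) := by
        intro i
        have hTy : s (y : L) * T i = T i * s (y : L) := hTcomm i _ (hsmemS _ y.2)
        have e1 : s (y : L) (T i (ca ⟨xi i, hxiX i⟩)) = T i (s (y : L) (ca ⟨xi i, hxiX i⟩)) := by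
          have := congrFun (congrArg DFunLike.coe hTy) (ca ⟨xi i, hxiX i⟩)
          simpa [Module.End.mul_apply] using this
        rw [e1, hcoc y ⟨xi i, hxiX i⟩, hfi i]
      rw [Finset.sum_congr rfl fun i _ => h1 i]
      exact hTf (ca y)
    refine ⟨a, ?_⟩
    rw [hMmem]
    rintro v ⟨y, rfl⟩
    have : ⁅l + (a : L), φ y⁆ = φ (cx y) := by
      have e4 : ⁅(a : L), φ y⁆ = -((ca y : A) : L) := by
        rw [← lie_skew ((a : L)) (φ y), ← hsval (φ y) a, hsφ, hkey y]
      rw [add_lie, hdec y, e4]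
      abel
    rw [this]
    exact ⟨cx y, rfl⟩
  -- triviality : A ∩ M = 0
  have htriv : ∀ x : L, x ∈ A → x ∈ M → x = 0 := by
    intro x hxA hxM
    have hzero : ∀ y : X₀, ⁅x, φ y⁆ = 0 := by
      intro y
      apply hAX _ ?_ ((hMmem x).mp hxM _ ⟨y, rfl⟩)
      have : ⁅x, φ y⁆ = -⁅φ y, x⁆ := (lie_skew _ _).symm
      rw [this]
      exact A.toSubmodule.neg_mem (A.lie_mem hxA)
    have hxB : ∀ b ∈ B, ⁅b, x⁆ = 0 := by
      intro b hb
      obtain ⟨a', ha', x₀, hx₀, rfl⟩ := hsup b hb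
      have h1 : ⁅a', x⁆ = 0 := habel _ ha' _ hxA
      have h2 : ⁅x₀, x⁆ = 0 := by
        have hx0eq : x₀ = φ ⟨x₀, hx₀⟩ + ((ν ⟨x₀, hx₀⟩ : A) : L) := by rw [hφ]; abel
        rw [hx0eq, add_lie, habel _ (ν ⟨x₀, hx₀⟩).2 _ hxA, add_zero,
          ← lie_skew (φ ⟨x₀, hx₀⟩) x, hzero, neg_zero]
      rw [add_lie, h1, h2, add_zero]
    set Z : LieIdeal F L :=
      { toSubmodule :=
          { carrier := {z : L | z ∈ A ∧ ∀ b ∈ B, ⁅b, z⁆ = 0}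
            zero_mem' := ⟨A.toSubmodule.zero_mem, fun b _ => lie_zero b⟩
            add_mem' := fun {u w} hu hw =>
              ⟨A.toSubmodule.add_mem hu.1 hw.1, fun b hb => by
                rw [lie_add, hu.2 b hb, hw.2 b hb, add_zero]⟩
            smul_mem' := fun c u hu =>
              ⟨A.toSubmodule.smul_mem c hu.1, fun b hb => by
                rw [lie_smul, hu.2 b hb, smul_zero]⟩ }
        lie_mem := by
          intro w z hz
          refine ⟨A.lie_mem hz.1, fun b hb => ?_⟩
          rw [leibniz_lie]
          have hbw : ⁅b, w⁆ ∈ B := by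
            rw [← lie_skew]
            exact B.toSubmodule.neg_mem (B.lie_mem hb)
          rw [hz.2 _ hbw, hz.2 b hb, lie_zero, add_zero] } with hZ
    have hZA : Z ≤ A := fun z hz => hz.1
    have hZne : Z ≠ A := by
      intro h
      apply hBnotA
      intro b hb
      refine (hself b).mp fun a ha => ?_
      have haZ : a ∈ Z := by rw [h]; exact ha
      exact haZ.2 b hb
    have hZbot : Z = ⊥ := by
      rcases hA.le_iff.mp hZA with h | h
      · exact h
      · exact absurd h hZne
    have hxZ : x ∈ Z := ⟨hxA, hxB⟩
    rw [hZbot] at hxZ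
    exact (LieSubmodule.mem_bot _).mp hxZ
  -- assemble
  refine ⟨M, fun x => ?_, htriv⟩
  obtain ⟨a, haM⟩ := hsurj x
  exact ⟨-(a : L), A.toSubmodule.neg_mem a.2, x + (a : L), haM, by abel⟩
end

section
/- Let L be a finite-dimensional solvable Lie algebra, A a minimal ideal of L, and M, K two complements to A in L. Then M and K are conjugate under the group I(L:A) of automorphisms generated by exp(ad a), a ∈ A, if and only if M ∩ C_L(A) = K ∩ C_L(A). -/
section Aux

open LieAlgebra in
/-- A finite commuting family of locally nilpotent operators (given by `ad`) acting on a
nonzero invariant subspace has a common nonzero kernel vector. -/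
lemma aux_common_kernel {F L : Type*} [Field F] [LieRing L] [LieAlgebra F L]
    (l : List L) (W : Submodule F L)
    (h1 : ∀ b ∈ l, ∀ w ∈ W, ⁅b, w⁆ ∈ W)
    (h2 : ∀ b ∈ l, ∀ w ∈ W, ∃ k, ((ad F L b) ^ k) w = 0)
    (h3 : ∀ b ∈ l, ∀ b' ∈ l, ∀ w ∈ W, ⁅b, ⁅b', w⁆⁆ = ⁅b', ⁅b, w⁆⁆)
    (hW : ∃ w ∈ W, w ≠ 0) :
    ∃ w ∈ W, w ≠ 0 ∧ ∀ b ∈ l, ⁅b, w⁆ = 0 := by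
  classical
  induction l generalizing W with
  | nil =>
    obtain ⟨w, hwW, hw0⟩ := hW
    exact ⟨w, hwW, hw0, by simp⟩
  | cons b t ih =>
    obtain ⟨w0, hw0W, hw00⟩ := hW
    have hbl : b ∈ b :: t := List.mem_cons_self
    -- powers of `ad b` stay in `W`
    have hpow : ∀ k, ((ad F L b) ^ k) w0 ∈ W := by
      intro k
      induction k with
      | zero => simpa using hw0W
      | succ k ihk =>
        rw [pow_succ']
        have : ((ad F L b) * (ad F L b) ^ k) w0 = ⁅b, ((ad F L b) ^ k) w0⁆ := by
          simp [Module.End.mul_apply, ad_apply]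
        rw [this]
        exact h1 b hbl _ ihk
    obtain ⟨k0, hk0⟩ := h2 b hbl w0 hw0W
    have hex : ∃ k, ((ad F L b) ^ k) w0 = 0 := ⟨k0, hk0⟩
    have hnne : Nat.find hex ≠ 0 := by
      intro h
      have := Nat.find_spec hex
      rw [h] at this
      simp at this
      exact hw00 this
    have hsucc : Nat.find hex - 1 + 1 = Nat.find hex := Nat.succ_pred_eq_of_ne_zero hnne
    set w' := ((ad F L b) ^ (Nat.find hex - 1)) w0 with hw'
    have hw'W : w' ∈ W := hpow _
    have hw'ne : w' ≠ 0 := Nat.find_min hex (by omega)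
    have hbw' : ⁅b, w'⁆ = 0 := by
      have h := Nat.find_spec hex
      rw [← hsucc, pow_succ'] at h
      simpa [Module.End.mul_apply, ad_apply, hw'] using h
    -- the kernel of `ad b` inside `W`
    set W' := W ⊓ LinearMap.ker (ad F L b) with hW'
    have hmemW' : ∀ x, x ∈ W' ↔ x ∈ W ∧ ⁅b, x⁆ = 0 := by
      intro x
      simp [hW', LinearMap.mem_ker, ad_apply]
    have h1' : ∀ c ∈ t, ∀ w ∈ W', ⁅c, w⁆ ∈ W' := by
      intro c hc w hw
      rw [hmemW'] at hw ⊢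
      refine ⟨h1 c (List.mem_cons_of_mem b hc) w hw.1, ?_⟩
      rw [h3 b hbl c (List.mem_cons_of_mem b hc) w hw.1, hw.2]
      simp
    have h2' : ∀ c ∈ t, ∀ w ∈ W', ∃ k, ((ad F L c) ^ k) w = 0 := by
      intro c hc w hw
      exact h2 c (List.mem_cons_of_mem b hc) w ((hmemW' w).mp hw).1
    have h3' : ∀ c ∈ t, ∀ c' ∈ t, ∀ w ∈ W', ⁅c, ⁅c', w⁆⁆ = ⁅c', ⁅c, w⁆⁆ := by
      intro c hc c' hc' w hw
      exact h3 c (List.mem_cons_of_mem b hc) c' (List.mem_cons_of_mem b hc') w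
        ((hmemW' w).mp hw).1
    obtain ⟨w, hwW', hwne, hwt⟩ := ih W' h1' h2' h3' ⟨w', (hmemW' w').mpr ⟨hw'W, hbw'⟩, hw'ne⟩
    refine ⟨w, ((hmemW' w).mp hwW').1, hwne, ?_⟩
    intro c hc
    rcases List.mem_cons.mp hc with rfl | hc
    · exact ((hmemW' w).mp hwW').2
    · exact hwt c hc

end Aux

/-- Two complements `M`, `K` to a minimal ideal `A` of a finite-dimensional solvable Lie
algebra `L` are conjugate under the group `I(L:A)` generated by the automorphisms
`id + ad a`, `a ∈ A`, if and only if `M ∩ C_L(A) = K ∩ C_L(A)`. -/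
theorem complements_conjugate_iff_centralizer_intersections_eq (F : Type*) [Field F]
    (L : Type*) [LieRing L] [LieAlgebra F L] [FiniteDimensional F L]
    [LieAlgebra.IsSolvable L]
    (A : LieIdeal F L) (hA : IsAtom A) (M K : LieSubalgebra F L)
    (hM₁ : ∀ x : L, ∃ a ∈ A, ∃ m ∈ M, x = a + m)
    (hM₂ : ∀ x : L, x ∈ A → x ∈ M → x = 0)
    (hK₁ : ∀ x : L, ∃ a ∈ A, ∃ m ∈ K, x = a + m)
    (hK₂ : ∀ x : L, x ∈ A → x ∈ K → x = 0) :
    (∃ l : List L, (∀ a ∈ l, a ∈ A) ∧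
        (K : Set L) =
          ⇑((l.map (fun a => (1 : Module.End F L) + LieAlgebra.ad F L a)).prod) '' (M : Set L))
      ↔ {z : L | z ∈ M ∧ ∀ a ∈ A, ⁅z, a⁆ = 0} = {z : L | z ∈ K ∧ ∀ a ∈ A, ⁅z, a⁆ = 0} := by
  classical
  -- `A` is abelian
  have habA : ∀ a ∈ A, ∀ b ∈ A, ⁅a, b⁆ = (0 : L) := by
    have hle : ⁅A, A⁆ ≤ A := LieSubmodule.lie_le_left A A
    rcases hA.le_iff.mp hle with hbot | heq
    · intro a ha b hb
      have : ⁅a, b⁆ ∈ (⊥ : LieIdeal F L) := hbot ▸ LieSubmodule.lie_mem_lie ha hb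
      simpa using this
    · exfalso
      have hAle : ∀ k, A ≤ LieAlgebra.derivedSeries F L k := by
        intro k
        induction k with
        | zero =>
          rw [LieAlgebra.derivedSeries_def, LieAlgebra.derivedSeriesOfIdeal_zero]
          exact le_top
        | succ k ihk =>
          have hstep : LieAlgebra.derivedSeries F L (k+1) =
              ⁅LieAlgebra.derivedSeries F L k, LieAlgebra.derivedSeries F L k⁆ :=
            LieAlgebra.derivedSeriesOfIdeal_succ F L ⊤ k
          rw [hstep]
          calc A = ⁅A, A⁆ := heq.symm
            _ ≤ _ := LieSubmodule.mono_lie ihk ihk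
      obtain ⟨k, hk⟩ := LieAlgebra.IsSolvable.solvable (R := F) (L := L)
      exact hA.1 (le_bot_iff.mp (hk ▸ hAle k))
  have hAne : ∃ a ∈ A, a ≠ (0 : L) := by
    by_contra hcon
    push_neg at hcon
    exact hA.1 ((LieSubmodule.eq_bot_iff A).mpr hcon)
  constructor
  · -- forward direction
    rintro ⟨l, hl, himg⟩
    have hsumA : ∀ l' : List L, (∀ x ∈ l', x ∈ A) → l'.sum ∈ A := by
      intro l'
      induction l' with
      | nil => intro _; simpa using zero_mem A
      | cons c t iht =>
        intro hmem
        rw [List.sum_cons]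
        exact add_mem (hmem c (List.mem_cons_self))
          (iht fun x hx => hmem x (List.mem_cons_of_mem c hx))
    have hsum : l.sum ∈ A := hsumA l hl
    have hprod : (l.map (fun a => (1 : Module.End F L) + LieAlgebra.ad F L a)).prod
        = 1 + LieAlgebra.ad F L l.sum := by
      clear himg hsum
      induction l with
      | nil => simp
      | cons a t iht =>
        have hta : t.sum ∈ A := hsumA t (fun x hx => hl x (List.mem_cons_of_mem a hx))
        rw [List.map_cons, List.prod_cons,
          iht (fun x hx => hl x (List.mem_cons_of_mem a hx)), List.sum_cons]
        have hzero : LieAlgebra.ad F L a * LieAlgebra.ad F L t.sum = 0 := by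
          apply LinearMap.ext
          intro z
          have h1 : ⁅t.sum, z⁆ ∈ A := lie_mem_left F L A t.sum z hta
          simp only [Module.End.mul_apply, LieAlgebra.ad_apply, LinearMap.zero_apply]
          exact habA a (hl a (List.mem_cons_self)) _ h1
        rw [mul_add, mul_one, add_mul, one_mul, hzero, add_zero,
          map_add (LieAlgebra.ad F L)]
        abel
    rw [hprod] at himg
    set s := l.sum with hs
    ext z
    simp only [Set.mem_setOf_eq]
    constructor
    · rintro ⟨hzM, hzC⟩
      refine ⟨?_, hzC⟩
      have : ((1 : Module.End F L) + LieAlgebra.ad F L s) z = z := by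
        simp only [LinearMap.add_apply, Module.End.one_apply, LieAlgebra.ad_apply]
        have : ⁅s, z⁆ = 0 := by
          rw [← lie_skew, hzC s hsum, neg_zero]
        rw [this, add_zero]
      have hzK : z ∈ (K : Set L) := by
        rw [himg]
        exact ⟨z, hzM, this⟩
      exact hzK
    · rintro ⟨hzK, hzC⟩
      refine ⟨?_, hzC⟩
      have hzK' : z ∈ (K : Set L) := hzK
      rw [himg] at hzK'
      obtain ⟨m, hmM, hme⟩ := hzK'
      have hme' : z = m + ⁅s, m⁆ := by
        rw [← hme]
        simp [LinearMap.add_apply, Module.End.one_apply, LieAlgebra.ad_apply]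
      have hsmA : ⁅s, m⁆ ∈ A := lie_mem_left F L A s m hsum
      have hmC : ∀ a ∈ A, ⁅m, a⁆ = 0 := by
        intro a ha
        have : ⁅m, a⁆ = ⁅z, a⁆ - ⁅⁅s, m⁆, a⁆ := by
          rw [hme']
          rw [add_lie]
          abel
        rw [this, hzC a ha, habA _ hsmA a ha, sub_zero]
      have : ⁅s, m⁆ = 0 := by
        rw [← lie_skew, hmC s hsum, neg_zero]
      rw [hme', this, add_zero]
      exact hmM
  · -- backward direction
    intro h
    suffices hex : ∃ b ∈ A, (K : Set L)
        = ⇑((1 : Module.End F L) + LieAlgebra.ad F L b) '' (M : Set L) by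
      obtain ⟨b, hbA, himg⟩ := hex
      refine ⟨[b], by simpa using hbA, ?_⟩
      simpa using himg
    -- decomposition with respect to `K`
    choose aK haK kK hkK heqK using hK₁
    have huniq : ∀ x a k, a ∈ A → k ∈ K → x = a + k → a = aK x := by
      intro x a k ha hk hxe
      have h2 : a + k = aK x + kK x := by rw [← hxe]; exact heqK x
      have h1 : a - aK x = kK x - k := by
        rw [sub_eq_sub_iff_add_eq_add, h2, add_comm]
      have h3 : a - aK x = 0 :=
        hK₂ _ (sub_mem ha (haK x)) (h1 ▸ sub_mem (hkK x) hk)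
      exact sub_eq_zero.mp h3
    have haK0 : ∀ x, x ∈ K → aK x = 0 := by
      intro x hx
      exact (huniq x 0 x (zero_mem A) hx (by rw [zero_add])).symm
    have hkKdef : ∀ x, kK x = x - aK x := by
      intro x
      have := heqK x
      rw [eq_sub_iff_add_eq, add_comm, ← this]
    have hder : ∀ m ∈ M, ∀ m' ∈ M, aK ⁅m, m'⁆ = ⁅m, aK m'⁆ - ⁅m', aK m⁆ := by
      intro m hm m' hm'
      refine (huniq ⁅m, m'⁆ (⁅m, aK m'⁆ - ⁅m', aK m⁆) ⁅kK m, kK m'⁆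
        (sub_mem (lie_mem_right F L A m (aK m') (haK m'))
          (lie_mem_right F L A m' (aK m) (haK m)))
        (K.lie_mem (hkK m) (hkK m')) ?_).symm
      rw [hkKdef m, hkKdef m', sub_lie, lie_sub, lie_sub,
        habA _ (haK m) _ (haK m'),
        show ⁅aK m, m'⁆ = -⁅m', aK m⁆ from (lie_skew (aK m) m').symm]
      abel
    -- Case 1 : `M` centralises `A`
    by_cases hMc : ∀ m ∈ M, ∀ a ∈ A, ⁅m, a⁆ = (0 : L)
    · refine ⟨0, zero_mem A, ?_⟩
      have hMK : ∀ m, m ∈ M → m ∈ K := by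
        intro m hm
        have hmem : m ∈ {z : L | z ∈ M ∧ ∀ a ∈ A, ⁅z, a⁆ = 0} := ⟨hm, hMc m hm⟩
        rw [h] at hmem
        exact hmem.1
      have hKM : ∀ k, k ∈ K → k ∈ M := by
        intro k hk
        obtain ⟨a, ha, m, hm, hkam⟩ := hM₁ k
        have hmK : m ∈ K := hMK m hm
        have haz : a = 0 := by
          refine hK₂ a ha ?_
          have hak : a = k - m := by rw [hkam]; abel
          rw [hak]
          exact sub_mem hk hmK
        rw [hkam, haz, zero_add]
        exact hm
      have h10 : (1 : Module.End F L) + LieAlgebra.ad F L 0 = 1 := by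
        rw [map_zero (LieAlgebra.ad F L), add_zero]
      rw [h10]
      ext x
      simp only [Set.mem_image, SetLike.mem_coe, Module.End.one_apply]
      constructor
      · intro hx
        exact ⟨x, hKM x hx, rfl⟩
      · rintro ⟨m, hm, rfl⟩
        exact hMK m hm
    push_neg at hMc
    obtain ⟨m₀, hm₀M, a₀, ha₀A, hm₀a₀⟩ := hMc
    -- the "derived series" of `M`, as submodules of `L`
    set D : ℕ → Submodule F L := fun j => Nat.rec M.toSubmodule
      (fun _ Dj => Submodule.span F {x | ∃ a ∈ Dj, ∃ b ∈ Dj, x = ⁅a, b⁆}) j with hD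
    have hD0 : D 0 = M.toSubmodule := rfl
    have hDsucc : ∀ j, D (j+1)
        = Submodule.span F {x | ∃ a ∈ D j, ∃ b ∈ D j, x = ⁅a, b⁆} := fun j => rfl
    have hDM : ∀ j, ∀ x ∈ D j, x ∈ M := by
      intro j
      induction j with
      | zero => intro x hx; exact hx
      | succ j ih =>
        intro x hx
        rw [hDsucc j] at hx
        have hle : Submodule.span F {x | ∃ a ∈ D j, ∃ b ∈ D j, x = ⁅a, b⁆}
            ≤ M.toSubmodule := by
          rw [Submodule.span_le]
          rintro y ⟨a, ha, b, hb, rfl⟩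
          exact M.lie_mem (ih a ha) (ih b hb)
        exact hle hx
    have hDideal : ∀ j, ∀ m ∈ M, ∀ x ∈ D j, ⁅m, x⁆ ∈ D j := by
      intro j
      induction j with
      | zero => intro m hm x hx; exact M.lie_mem hm hx
      | succ j ih =>
        intro m hm x hx
        rw [hDsucc j] at hx ⊢
        induction hx using Submodule.span_induction with
        | mem y hy =>
          obtain ⟨a, ha, b, hb, rfl⟩ := hy
          rw [leibniz_lie]
          refine add_mem (Submodule.subset_span ⟨⁅m, a⁆, ih m hm a ha, b, hb, rfl⟩)
            (Submodule.subset_span ⟨a, ha, ⁅m, b⁆, ih m hm b hb, rfl⟩)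
        | zero => rw [lie_zero]; exact zero_mem _
        | add y z _ _ hy hz => rw [lie_add]; exact add_mem hy hz
        | smul c y _ hy => rw [lie_smul]; exact Submodule.smul_mem _ c hy
    have hDbra : ∀ j, ∀ a ∈ D j, ∀ b ∈ D j, ⁅a, b⁆ ∈ D (j+1) := by
      intro j a ha b hb
      rw [hDsucc j]
      exact Submodule.subset_span ⟨a, ha, b, hb, rfl⟩
    have hDder : ∀ j, ∀ x ∈ D j, x ∈ LieAlgebra.derivedSeries F L j := by
      intro j
      induction j with
      | zero =>
        intro x _
        rw [LieAlgebra.derivedSeries_def, LieAlgebra.derivedSeriesOfIdeal_zero]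
        exact LieSubmodule.mem_top x
      | succ j ih =>
        intro x hx
        rw [hDsucc j] at hx
        have hstep : LieAlgebra.derivedSeries F L (j+1) =
            ⁅LieAlgebra.derivedSeries F L j, LieAlgebra.derivedSeries F L j⁆ :=
          LieAlgebra.derivedSeriesOfIdeal_succ F L ⊤ j
        rw [hstep]
        induction hx using Submodule.span_induction with
        | mem y hy =>
          obtain ⟨a, ha, b, hb, rfl⟩ := hy
          exact LieSubmodule.lie_mem_lie (ih a ha) (ih b hb)
        | zero => exact zero_mem _
        | add y z _ _ hy hz => exact add_mem hy hz
        | smul c y _ hy => exact Submodule.smul_mem _ c hy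
    have hPex : ∃ j, ∀ x ∈ D j, ∀ a ∈ A, ⁅x, a⁆ = (0 : L) := by
      obtain ⟨k, hk⟩ := LieAlgebra.IsSolvable.solvable (R := F) (L := L)
      refine ⟨k, fun x hx a _ => ?_⟩
      have : x ∈ LieAlgebra.derivedSeries F L k := hDder k x hx
      rw [hk] at this
      have hx0 : x = 0 := by simpa using this
      rw [hx0, zero_lie]
    have hnne : Nat.find hPex ≠ 0 := by
      intro h0
      have := Nat.find_spec hPex
      rw [h0] at this
      exact hm₀a₀ (this m₀ hm₀M a₀ ha₀A)
    have hsucc : Nat.find hPex - 1 + 1 = Nat.find hPex := Nat.succ_pred_eq_of_ne_zero hnne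
    set j := Nat.find hPex - 1 with hj
    have hPj : ¬ ∀ x ∈ D j, ∀ a ∈ A, ⁅x, a⁆ = (0 : L) := Nat.find_min hPex (by omega)
    have hBB : ∀ b ∈ D j, ∀ c ∈ D j, ∀ a ∈ A, ⁅⁅b, c⁆, a⁆ = (0 : L) := by
      intro b hb c hc a ha
      have h1 : ⁅b, c⁆ ∈ D (j + 1) := hDbra j b hb c hc
      rw [hj, hsucc] at h1
      exact Nat.find_spec hPex _ h1 a ha
    have hBnotC : ∃ b ∈ D j, ∃ a ∈ A, ⁅b, a⁆ ≠ (0 : L) := by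
      push_neg at hPj
      exact hPj
    have hcomm : ∀ b ∈ D j, ∀ c ∈ D j, ∀ a ∈ A, ⁅b, ⁅c, a⁆⁆ = ⁅c, ⁅b, a⁆⁆ := by
      intro b hb c hc a ha
      have h2 : ⁅b, ⁅c, a⁆⁆ - ⁅c, ⁅b, a⁆⁆ = 0 := by
        rw [← lie_lie]
        exact hBB b hb c hc a ha
      exact sub_eq_zero.mp h2
    have hDneg : ∀ b ∈ D j, ∀ m ∈ M, ⁅b, m⁆ ∈ D j := by
      intro b hb m hm
      rw [show ⁅b, m⁆ = -⁅m, b⁆ from by rw [lie_skew]]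
      exact neg_mem (hDideal j m hm b hb)
    by_cases hinj : ∃ b₀ ∈ D j, ∀ a ∈ A, ⁅b₀, a⁆ = 0 → a = 0
    · -- there is an element of `B` acting invertibly on `A`
      obtain ⟨b₀, hb₀D, hb₀inj⟩ := hinj
      have hb₀M : b₀ ∈ M := hDM j b₀ hb₀D
      -- `ad b₀` is surjective on `A`
      have hsurj : ∀ y ∈ A, ∃ v ∈ A, ⁅b₀, v⁆ = y := by
        have hmap : ∀ x ∈ (LieSubmodule.toSubmodule A), (LieAlgebra.ad F L b₀) x
            ∈ (LieSubmodule.toSubmodule A) := by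
          intro x hx
          rw [LieSubmodule.mem_toSubmodule] at hx ⊢
          rw [LieAlgebra.ad_apply]
          exact lie_mem_right F L A b₀ x hx
        set f := (LieAlgebra.ad F L b₀).restrict hmap with hfdef
        have hfinj : Function.Injective f := by
          intro u v huv
          have h1 : ⁅b₀, (u : L) - (v : L)⁆ = 0 := by
            have h2 := congrArg Subtype.val huv
            simp only [hfdef, LinearMap.restrict_apply, LieAlgebra.ad_apply] at h2
            rw [lie_sub, h2, sub_self]
          have h3 : (u : L) - (v : L) = 0 := by
            refine hb₀inj _ ?_ h1
            exact sub_mem ((LieSubmodule.mem_toSubmodule A).mp u.2)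
              ((LieSubmodule.mem_toSubmodule A).mp v.2)
          exact Subtype.ext (sub_eq_zero.mp h3)
        have hfsurj : Function.Surjective f := LinearMap.surjective_of_injective hfinj
        intro y hy
        obtain ⟨v, hv⟩ := hfsurj ⟨y, (LieSubmodule.mem_toSubmodule A).mpr hy⟩
        refine ⟨(v : L), (LieSubmodule.mem_toSubmodule A).mp v.2, ?_⟩
        have h4 := congrArg Subtype.val hv
        simpa only [hfdef, LinearMap.restrict_apply, LieAlgebra.ad_apply] using h4
      obtain ⟨v, hvA, hveq⟩ := hsurj (aK b₀) (haK b₀)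
      set e : L → L := fun x => aK x - ⁅x, v⁆ with he
      have heA : ∀ x, e x ∈ A := fun x => sub_mem (haK x) (lie_mem_right F L A x v hvA)
      have heb₀ : e b₀ = 0 := by
        rw [he]
        simp only []
        rw [hveq, sub_self]
      have heder : ∀ m ∈ M, ∀ m' ∈ M, e ⁅m, m'⁆ = ⁅m, e m'⁆ - ⁅m', e m⁆ := by
        intro m hm m' hm'
        simp only [he]
        rw [hder m hm m' hm', lie_lie, lie_sub, lie_sub]
        abel
      have heN : ∀ x, x ∈ M → (∀ a ∈ A, ⁅x, a⁆ = 0) → e x = 0 := by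
        intro x hxM hxC
        have hxK : x ∈ K := by
          have hmem : x ∈ {z : L | z ∈ M ∧ ∀ a ∈ A, ⁅z, a⁆ = 0} := ⟨hxM, hxC⟩
          rw [h] at hmem
          exact hmem.1
        have h1 : aK x = 0 := haK0 x hxK
        have h2 : ⁅x, v⁆ = 0 := hxC v hvA
        simp only [he]
        rw [h1, h2, sub_zero]
      have hclaim1 : ∀ b ∈ D j, e b = 0 := by
        intro b hbD
        have hbM : b ∈ M := hDM j b hbD
        have h1 : e ⁅b, b₀⁆ = 0 := heN _ (M.lie_mem hbM hb₀M) (hBB b hbD b₀ hb₀D)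
        rw [heder b hbM b₀ hb₀M, heb₀, lie_zero, zero_sub, neg_eq_zero] at h1
        exact hb₀inj _ (heA b) h1
      have hclaim2 : ∀ m ∈ M, aK m = ⁅m, v⁆ := by
        intro m hm
        have h1 : e ⁅m, b₀⁆ = 0 := hclaim1 _ (hDideal j m hm b₀ hb₀D)
        rw [heder m hm b₀ hb₀M, heb₀, lie_zero, zero_sub, neg_eq_zero] at h1
        have h2 : e m = 0 := hb₀inj _ (heA m) h1
        simp only [he] at h2
        exact sub_eq_zero.mp h2
      refine ⟨v, hvA, ?_⟩
      have hkey : ∀ m, m ∈ M → m + ⁅v, m⁆ = kK m := by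
        intro m hm
        rw [hkKdef m, hclaim2 m hm,
          show ⁅v, m⁆ = -⁅m, v⁆ from by rw [lie_skew]]
        abel
      ext x
      simp only [Set.mem_image, SetLike.mem_coe, LinearMap.add_apply, Module.End.one_apply,
        LieAlgebra.ad_apply]
      constructor
      · intro hxK
        obtain ⟨a, ha, m, hm, hxam⟩ := hM₁ x
        refine ⟨m, hm, ?_⟩
        have hx2 : x = (a + aK m) + kK m := by
          calc x = a + m := hxam
            _ = a + (aK m + kK m) := by rw [← heqK m]
            _ = (a + aK m) + kK m := by rw [add_assoc]
        have h0 : a + aK m = aK x :=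
          huniq x (a + aK m) (kK m) (add_mem ha (haK m)) (hkK m) hx2
        have haKx : aK x = 0 := haK0 x hxK
        have hxk : x = kK m := by rw [hx2, h0, haKx, zero_add]
        rw [hkey m hm, hxk]
      · rintro ⟨m, hm, rfl⟩
        rw [hkey m hm]
        exact hkK m
    · -- otherwise every element of `B` acts locally nilpotently : contradiction
      exfalso
      push_neg at hinj
      have hlocnil : ∀ b ∈ D j, ∀ a ∈ A, ∃ k, ((LieAlgebra.ad F L b) ^ k) a = 0 := by
        intro b hbD
        set f := LieAlgebra.ad F L b with hf
        have hfapp : ∀ x : L, f x = ⁅b, x⁆ := fun x => LieAlgebra.ad_apply F L b x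
        have hfA : ∀ a ∈ A, f a ∈ A := by
          intro a ha
          rw [hfapp]
          exact lie_mem_right F L A b a ha
        have hfpowA : ∀ k, ∀ a ∈ A, (f ^ k) a ∈ A := by
          intro k
          induction k with
          | zero => intro a ha; simpa using ha
          | succ k ih =>
            intro a ha
            rw [pow_succ, Module.End.mul_apply]
            exact ih (f a) (hfA a ha)
        have hswap : ∀ c ∈ D j, ∀ k, ∀ a ∈ A, (f ^ k) ⁅c, a⁆ = ⁅c, (f ^ k) a⁆ := by
          intro c hc k
          induction k with
          | zero => intro a _; simp
          | succ k ih =>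
            intro a ha
            rw [pow_succ, Module.End.mul_apply, Module.End.mul_apply, hfapp,
              hcomm b hbD c hc a ha, ← hfapp, ih _ (hfA a ha)]
        have hbmD : ∀ m ∈ M, ⁅b, m⁆ ∈ D j := fun m hm => hDneg b hbD m hm
        have hform : ∀ m ∈ M, ∀ k, ∀ a ∈ A,
            (f ^ (k+1)) ⁅m, a⁆ = ⁅m, (f ^ (k+1)) a⁆ + (k+1) • ⁅⁅b, m⁆, (f ^ k) a⁆ := by
          intro m hm k
          induction k with
          | zero =>
            intro a ha
            simp only [zero_add, pow_one, pow_zero, Module.End.one_apply, one_smul, hfapp]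
            rw [leibniz_lie, add_comm]
          | succ k ih =>
            intro a ha
            have hstep1 : (f ^ (k+2)) ⁅m, a⁆ = (f ^ (k+1)) (f ⁅m, a⁆) := by
              rw [pow_succ, Module.End.mul_apply]
            rw [hstep1, hfapp, leibniz_lie, map_add]
            have h1 : (f ^ (k+1)) ⁅⁅b, m⁆, a⁆ = ⁅⁅b, m⁆, (f ^ (k+1)) a⁆ :=
              hswap ⁅b, m⁆ (hbmD m hm) (k+1) a ha
            have h2 : (f ^ (k+1)) ⁅m, ⁅b, a⁆⁆
                = ⁅m, (f ^ (k+1)) ⁅b, a⁆⁆ + (k+1) • ⁅⁅b, m⁆, (f ^ k) ⁅b, a⁆⁆ :=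
              ih ⁅b, a⁆ (lie_mem_right F L A b a ha)
            have h3 : ∀ i : ℕ, (f ^ i) ⁅b, a⁆ = (f ^ (i+1)) a := by
              intro i
              rw [pow_succ, Module.End.mul_apply, hfapp]
            rw [h1, h2, h3, h3]
            rw [succ_nsmul _ (k+1)]
            abel
        have hkill : ∀ m ∈ M, ∀ k, ∀ a ∈ A, (f ^ k) a = 0 → (f ^ (k+1)) ⁅m, a⁆ = 0 := by
          intro m hm k a ha hk0
          have hk1 : (f ^ (k+1)) a = 0 := by
            rw [pow_succ', Module.End.mul_apply, hk0, map_zero]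
          rw [hform m hm k a ha, hk0, hk1, lie_zero, lie_zero, smul_zero, add_zero]
        -- the generalised kernel of `f` on `A` is a nonzero ideal contained in `A`
        intro a haA
        have hmono : Monotone fun k : ℕ => LinearMap.ker (f ^ k) := by
          intro k l hkl x hx
          rw [LinearMap.mem_ker] at hx ⊢
          obtain ⟨d, rfl⟩ := Nat.exists_eq_add_of_le hkl
          rw [add_comm, pow_add, Module.End.mul_apply, hx, map_zero]
        set p : Submodule F L := (LieSubmodule.toSubmodule A) ⊓ (⨆ k : ℕ, LinearMap.ker (f ^ k))
          with hp
        have hpmem : ∀ x : L, x ∈ p ↔ x ∈ A ∧ ∃ k, (f ^ k) x = 0 := by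
          intro x
          rw [hp, Submodule.mem_inf, Submodule.mem_iSup_of_directed _ hmono.directed_le]
          simp only [LinearMap.mem_ker, LieSubmodule.mem_toSubmodule]
        have hplie : ∀ (x s : L), s ∈ p → ⁅x, s⁆ ∈ p := by
          intro x s hs
          rw [hpmem] at hs
          obtain ⟨hsA, k, hsk⟩ := hs
          obtain ⟨c, hc, m, hm, hxcm⟩ := hM₁ x
          have hxs : ⁅x, s⁆ = ⁅m, s⁆ := by
            rw [hxcm, add_lie, habA c hc s hsA, zero_add]
          rw [hxs, hpmem]
          exact ⟨lie_mem_right F L A m s hsA, k + 1, hkill m hm k s hsA hsk⟩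
        set SI : LieIdeal F L := { p with lie_mem := fun {x s} hs => hplie x s hs }
          with hSI
        have hSImem : ∀ x : L, x ∈ SI ↔ x ∈ p := fun x => Iff.rfl
        have hSIle : SI ≤ A := by
          intro x hx
          rw [hSImem, hpmem] at hx
          exact hx.1
        have hSIne : SI ≠ ⊥ := by
          obtain ⟨a', ha'A, ha'0, ha'ne⟩ := hinj b hbD
          intro hbot
          have : a' ∈ SI := by
            rw [hSImem, hpmem]
            exact ⟨ha'A, 1, by rw [pow_one, hfapp, ha'0]⟩
          rw [hbot] at this
          exact ha'ne (by simpa using this)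
        have hSIA : SI = A := (hA.le_iff.mp hSIle).resolve_left hSIne
        have : a ∈ SI := by rw [hSIA]; exact haA
        rw [hSImem, hpmem] at this
        exact this.2
      -- a common nonzero kernel vector for all of `D j`
      obtain ⟨sF, hsF⟩ := IsNoetherian.noetherian (D j)
      have hlD : ∀ b ∈ sF.toList, b ∈ D j := by
        intro b hb
        rw [← hsF]
        exact Submodule.subset_span (Finset.mem_toList.mp hb)
      obtain ⟨w, hwA, hwne, hwl⟩ := aux_common_kernel sF.toList (LieSubmodule.toSubmodule A)
        (fun b _ x hx => by
          rw [LieSubmodule.mem_toSubmodule] at hx ⊢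
          exact lie_mem_right F L A b x hx)
        (fun b hb x hx => hlocnil b (hlD b hb) x ((LieSubmodule.mem_toSubmodule A).mp hx))
        (fun b hb c hc x hx => hcomm b (hlD b hb) c (hlD c hc) x
          ((LieSubmodule.mem_toSubmodule A).mp hx))
        (by
          obtain ⟨a, haA, hane⟩ := hAne
          exact ⟨a, (LieSubmodule.mem_toSubmodule A).mpr haA, hane⟩)
      have hwA' : w ∈ A := (LieSubmodule.mem_toSubmodule A).mp hwA
      have hwD : ∀ b ∈ D j, ⁅b, w⁆ = 0 := by
        intro b hb
        rw [← hsF] at hb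
        induction hb using Submodule.span_induction with
        | mem y hy => exact hwl y (Finset.mem_toList.mpr hy)
        | zero => rw [zero_lie]
        | add y z _ _ hy hz => rw [add_lie, hy, hz, add_zero]
        | smul c y _ hy => rw [smul_lie, hy, smul_zero]
      -- the common kernel is a nonzero ideal contained in `A`
      set q : Submodule F L := (LieSubmodule.toSubmodule A) ⊓ (⨅ b : D j, LinearMap.ker (LieAlgebra.ad F L (b : L)))
        with hq
      have hqmem : ∀ x : L, x ∈ q ↔ x ∈ A ∧ ∀ b ∈ D j, ⁅b, x⁆ = 0 := by
        intro x
        rw [hq, Submodule.mem_inf, Submodule.mem_iInf]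
        constructor
        · rintro ⟨h1, h2⟩
          refine ⟨(LieSubmodule.mem_toSubmodule A).mp h1, fun b hb => ?_⟩
          have := h2 ⟨b, hb⟩
          rwa [LinearMap.mem_ker, LieAlgebra.ad_apply] at this
        · rintro ⟨h1, h2⟩
          refine ⟨(LieSubmodule.mem_toSubmodule A).mpr h1, fun b => ?_⟩
          rw [LinearMap.mem_ker, LieAlgebra.ad_apply]
          exact h2 (b : L) b.2
      have hqlie : ∀ (x s : L), s ∈ q → ⁅x, s⁆ ∈ q := by
        intro x s hs
        rw [hqmem] at hs
        obtain ⟨hsA, hsk⟩ := hs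
        obtain ⟨c, hc, m, hm, hxcm⟩ := hM₁ x
        have hxs : ⁅x, s⁆ = ⁅m, s⁆ := by
          rw [hxcm, add_lie, habA c hc s hsA, zero_add]
        rw [hxs, hqmem]
        refine ⟨lie_mem_right F L A m s hsA, fun b hb => ?_⟩
        rw [leibniz_lie, hsk ⁅b, m⁆ (hDneg b hb m hm), hsk b hb, lie_zero, add_zero]
      set QI : LieIdeal F L := { q with lie_mem := fun {x s} hs => hqlie x s hs }
        with hQI
      have hQImem : ∀ x : L, x ∈ QI ↔ x ∈ q := fun x => Iff.rfl
      have hQIle : QI ≤ A := by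
        intro x hx
        rw [hQImem, hqmem] at hx
        exact hx.1
      have hQIne : QI ≠ ⊥ := by
        intro hbot
        have : w ∈ QI := by
          rw [hQImem, hqmem]
          exact ⟨hwA', hwD⟩
        rw [hbot] at this
        exact hwne (by simpa using this)
      have hQIA : QI = A := (hA.le_iff.mp hQIle).resolve_left hQIne
      obtain ⟨b, hbD, a, haA, hba⟩ := hBnotC
      have : a ∈ QI := by rw [hQIA]; exact haA
      rw [hQImem, hqmem] at this
      exact hba (this.2 b hbD)
end

section
/- Let L be a finite-dimensional solvable Lie algebra and A a minimal ideal of L. There is a bijection between the set of conjugacy classes under I(L:A) of complements to A in L, and the set of subalgebras B that are ideals of L, contained in C_L(A), and complement A inside C_L(A) (i.e. C_L(A) = A ⊕ B). -/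
open LieAlgebra Module Submodule

set_option linter.unusedSectionVars false
set_option maxHeartbeats 1000000

namespace Stitz

variable {F : Type*} [Field F] {L : Type*} [LieRing L] [LieAlgebra F L]
  [FiniteDimensional F L] [LieAlgebra.IsSolvable L]

/-- A minimal ideal of a solvable Lie algebra is abelian. -/
lemma atom_abelian (A : LieIdeal F L) (hA : IsAtom A) :
    ∀ a ∈ A, ∀ b ∈ A, ⁅a, b⁆ = 0 := by
  have hle : ⁅A, A⁆ ≤ A := LieSubmodule.lie_le_right A A
  rcases eq_or_lt_of_le hle with heq | hlt
  · exfalso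
    have hall : ∀ k, LieAlgebra.derivedSeriesOfIdeal F L k A = A := by
      intro k
      induction k with
      | zero => simp [LieAlgebra.derivedSeriesOfIdeal_zero]
      | succ k ih => rw [LieAlgebra.derivedSeriesOfIdeal_succ, ih, heq]
    obtain ⟨k, hk⟩ := (LieAlgebra.IsSolvable.solvable (R := F) (L := L))
    have hbot : A ≤ ⊥ := by
      calc A = LieAlgebra.derivedSeriesOfIdeal F L k A := (hall k).symm
        _ ≤ LieAlgebra.derivedSeries F L k :=
            LieAlgebra.derivedSeriesOfIdeal_mono le_top k
        _ = ⊥ := hk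
    exact hA.1 (le_bot_iff.mp hbot)
  · have hb : ⁅A, A⁆ = ⊥ := hA.2 _ hlt
    intro a ha b hb'
    have : ⁅a, b⁆ ∈ (⁅A, A⁆ : LieIdeal F L) := LieSubmodule.lie_mem_lie ha hb'
    rw [hb] at this
    exact (LieSubmodule.mem_bot _).mp this

section Cent

variable (A : LieIdeal F L)

/-- The centraliser of an ideal `A`, as an ideal. -/
def cent : LieIdeal F L where
  carrier := {x : L | ∀ a ∈ A, ⁅x, a⁆ = 0}
  add_mem' := by intro x y hx hy a ha; rw [add_lie, hx a ha, hy a ha, add_zero]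
  zero_mem' := by intro a _; exact zero_lie a
  smul_mem' := by intro c x hx a ha; rw [smul_lie, hx a ha, smul_zero]
  lie_mem := by
    intro y x hx a ha
    have h1 : ⁅y, a⁆ ∈ A := A.lie_mem ha
    have : ⁅⁅y, x⁆, a⁆ = ⁅y, ⁅x, a⁆⁆ - ⁅x, ⁅y, a⁆⁆ := by rw [lie_lie]
    rw [this, hx a ha, hx _ h1, lie_zero, sub_zero]

lemma mem_cent {x : L} : x ∈ cent A ↔ ∀ a ∈ A, ⁅x, a⁆ = 0 := Iff.rfl

end Cent

section Exp

variable {A : LieIdeal F L}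

lemma lie_mem_A {a x : L} (ha : a ∈ A) : ⁅a, x⁆ ∈ A := by
  rw [← lie_skew]; exact neg_mem (A.lie_mem ha)

lemma A_le_cent (hA : IsAtom A) : ∀ a ∈ A, a ∈ cent A :=
  fun a ha b hb => atom_abelian A hA a ha b hb

lemma ad_ad_eq_zero (hA : IsAtom A) {a b : L} (ha : a ∈ A) (hb : b ∈ A) (x : L) :
    ⁅a, ⁅b, x⁆⁆ = 0 :=
  atom_abelian A hA a ha _ (lie_mem_A hb)

lemma exp_mul (hA : IsAtom A) {a b : L} (ha : a ∈ A) (hb : b ∈ A) :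
    ((1 : Module.End F L) + ad F L a) * ((1 : Module.End F L) + ad F L b)
      = (1 : Module.End F L) + ad F L (a + b) := by
  ext x
  simp only [Module.End.mul_apply, LinearMap.add_apply, Module.End.one_apply, ad_apply, map_add]
  have h0 : ⁅a, ⁅b, x⁆⁆ = 0 := ad_ad_eq_zero hA ha hb x
  rw [h0]
  abel

lemma exp_lie (hA : IsAtom A) {a : L} (ha : a ∈ A) (x y : L) :
    ((1 : Module.End F L) + ad F L a) ⁅x, y⁆
      = ⁅((1 : Module.End F L) + ad F L a) x, ((1 : Module.End F L) + ad F L a) y⁆ := by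
  simp only [LinearMap.add_apply, Module.End.one_apply, ad_apply]
  rw [add_lie, lie_add, lie_add]
  have h0 : ⁅⁅a, x⁆, ⁅a, y⁆⁆ = 0 :=
    atom_abelian A hA _ (lie_mem_A ha) _ (lie_mem_A ha)
  rw [h0, add_zero, leibniz_lie a x y]
  abel

lemma exp_list_prod (hA : IsAtom A) :
    ∀ l : List L, (∀ a ∈ l, a ∈ A) →
      l.sum ∈ A ∧
      (l.map (fun a => (1 : Module.End F L) + ad F L a)).prod
        = (1 : Module.End F L) + ad F L l.sum := by
  intro l
  induction l with
  | nil =>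
    intro _
    refine ⟨by simp, ?_⟩
    simp
  | cons a t ih =>
    intro h
    have ha : a ∈ A := h a List.mem_cons_self
    obtain ⟨hsum, hprod⟩ := ih (fun b hb => h b (List.mem_cons_of_mem a hb))
    refine ⟨by simpa using add_mem ha hsum, ?_⟩
    rw [List.map_cons, List.prod_cons, hprod, exp_mul hA ha hsum, List.sum_cons]

/-- `1 + ad a` as a linear equivalence, for `a ∈ A`. -/
def expEquiv (hA : IsAtom A) {a : L} (ha : a ∈ A) : L ≃ₗ[F] L :=
  LinearEquiv.ofLinear ((1 : Module.End F L) + ad F L a) ((1 : Module.End F L) - ad F L a)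
    (by
      ext x
      simp only [LinearMap.comp_apply, LinearMap.add_apply, LinearMap.sub_apply,
        Module.End.one_apply, ad_apply, LinearMap.id_apply]
      have h0 : ⁅a, ⁅a, x⁆⁆ = 0 := ad_ad_eq_zero hA ha ha x
      rw [lie_sub, h0]
      abel)
    (by
      ext x
      simp only [LinearMap.comp_apply, LinearMap.add_apply, LinearMap.sub_apply,
        Module.End.one_apply, ad_apply, LinearMap.id_apply]
      have h0 : ⁅a, ⁅a, x⁆⁆ = 0 := ad_ad_eq_zero hA ha ha x
      rw [lie_add, h0]
      abel)

@[simp] lemma expEquiv_apply (hA : IsAtom A) {a : L} (ha : a ∈ A) (x : L) :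
    expEquiv hA ha x = x + ⁅a, x⁆ := rfl

end Exp

variable {A : LieIdeal F L} {M : LieSubalgebra F L}


section Gamma

lemma compl_isCompl (hM1 : ∀ x : L, ∃ a ∈ A, ∃ m ∈ M, x = a + m)
    (hM2 : ∀ x : L, x ∈ A → x ∈ M → x = 0) :
    IsCompl (A : Submodule F L) M.toSubmodule := by
  constructor
  · rw [disjoint_iff_inf_le]
    intro x hx
    exact hM2 x hx.1 hx.2
  · rw [codisjoint_iff, eq_top_iff]
    intro x _
    obtain ⟨a, ha, m, hm, rfl⟩ := hM1 x
    exact Submodule.add_mem_sup ha hm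

/-- The projection onto `A` along a complement `M`. -/
noncomputable def gam (h : IsCompl (A : Submodule F L) M.toSubmodule) : L →ₗ[F] L :=
  (A : Submodule F L).subtype ∘ₗ Submodule.projectionOnto _ _ h

variable (h : IsCompl (A : Submodule F L) M.toSubmodule)

lemma gam_mem (x : L) : gam h x ∈ A := (Submodule.linearProjOfIsCompl _ _ h x).2

lemma gam_left {a : L} (ha : a ∈ A) : gam h a = a := by
  simp only [gam, LinearMap.comp_apply]
  rw [Submodule.linearProjOfIsCompl_apply_left h ⟨a, ha⟩]
  rfl

lemma gam_right {m : L} (hm : m ∈ M) : gam h m = 0 := by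
  simp only [gam, LinearMap.comp_apply]
  rw [Submodule.linearProjOfIsCompl_apply_right h ⟨m, hm⟩]
  rfl

lemma gam_add {a m : L} (ha : a ∈ A) (hm : m ∈ M) : gam h (a + m) = a := by
  rw [map_add, gam_left h ha, gam_right h hm, add_zero]

lemma gam_eq_zero_iff (hM1 : ∀ x : L, ∃ a ∈ A, ∃ m ∈ M, x = a + m) {x : L} :
    gam h x = 0 ↔ x ∈ M := by
  constructor
  · intro hx
    obtain ⟨a, ha, m, hm, rfl⟩ := hM1 x
    rw [gam_add h ha hm] at hx
    rw [hx, zero_add]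
    exact hm
  · exact gam_right h

lemma gam_cocycle (hA : IsAtom A)
    (hM1 : ∀ x : L, ∃ a ∈ A, ∃ m ∈ M, x = a + m) (x y : L) :
    gam h ⁅x, y⁆ = ⁅gam h x, y⁆ + ⁅x, gam h y⁆ := by
  obtain ⟨a1, ha1, m1, hm1, rfl⟩ := hM1 x
  obtain ⟨a2, ha2, m2, hm2, rfl⟩ := hM1 y
  have e1 : gam h (a1 + m1) = a1 := gam_add h ha1 hm1
  have e2 : gam h (a2 + m2) = a2 := gam_add h ha2 hm2
  rw [e1, e2]
  have h0 : ⁅a1, a2⁆ = (0 : L) := atom_abelian A hA a1 ha1 a2 ha2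
  have hbr : ⁅a1 + m1, a2 + m2⁆ = ⁅a1, m2⁆ + ⁅m1, a2⁆ + ⁅m1, m2⁆ := by
    simp only [lie_add, add_lie, h0]
    abel
  rw [hbr, map_add, map_add, gam_right h (M.lie_mem hm1 hm2),
    gam_left h (lie_mem_A ha1), gam_left h (A.lie_mem ha2), add_zero]
  simp only [lie_add, add_lie, h0]
  abel

end Gamma



/-- A pointwise nilpotent endomorphism of a finite-dimensional space is nilpotent. -/
lemma ptNilp {V : Type*} [AddCommGroup V] [Module F V] [FiniteDimensional F V]
    (T : Module.End F V) (h : ∀ v : V, ∃ n : ℕ, (T ^ n) v = 0) : IsNilpotent T := by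
  classical
  have b := Module.finBasis F V
  set N := (Finset.univ : Finset (Fin (Module.finrank F V))).sup
    (fun i => (h (b i)).choose) with hN
  refine ⟨N, b.ext fun i => ?_⟩
  have h1 : (T ^ (h (b i)).choose) (b i) = 0 := (h (b i)).choose_spec
  have h2 : (h (b i)).choose ≤ N :=
    Finset.le_sup (f := fun i => (h (b i)).choose) (Finset.mem_univ i)
  have : (T ^ N) (b i) = (T ^ (N - (h (b i)).choose)) ((T ^ (h (b i)).choose) (b i)) := by
    rw [← Module.End.mul_apply, ← pow_add, Nat.sub_add_cancel h2]
  rw [this, h1, map_zero]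
  rfl

/-- Commuting nilpotent endomorphisms have a common nonzero kernel vector. -/
lemma commKer : ∀ (n : ℕ) (V : Type*) [AddCommGroup V] [Module F V] [FiniteDimensional F V],
    Module.finrank F V ≤ n → Nontrivial V →
    ∀ S : Set (Module.End F V), (∀ f ∈ S, ∀ g ∈ S, f * g = g * f) →
    (∀ f ∈ S, IsNilpotent f) →
    ∃ v : V, v ≠ 0 ∧ ∀ f ∈ S, f v = 0 := by
  intro n
  induction n with
  | zero =>
    intro V _ _ _ hrank hnt S _ _
    exfalso
    have : 0 < Module.finrank F V := Module.finrank_pos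
    omega
  | succ n ih =>
    intro V _ _ _ hrank hnt S hcomm hnil
    by_cases hS : ∀ f ∈ S, f = 0
    · obtain ⟨v, hv⟩ := exists_ne (0 : V)
      exact ⟨v, hv, fun f hf => by rw [hS f hf]; rfl⟩
    · push_neg at hS
      obtain ⟨f₀, hf₀S, hf₀⟩ := hS
      set W := LinearMap.ker f₀ with hW
      have hWne_top : W ≠ ⊤ := fun h => hf₀ (LinearMap.ker_eq_top.mp h)
      have hWne_bot : W ≠ ⊥ := by
        intro hbot
        obtain ⟨m, hm⟩ := hnil f₀ hf₀S
        -- smallest power: induction on m to find nonzero kernel vector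
        have : ∀ m : ℕ, f₀ ^ m = 0 → f₀ = 0 := by
          intro m
          induction m with
          | zero =>
            intro h0
            exfalso
            have : (1 : Module.End F V) ≠ 0 := by
              intro h1
              obtain ⟨v, hv⟩ := exists_ne (0 : V)
              exact hv (by have := congrArg (fun g : Module.End F V => g v) h1; simpa using this)
            exact this (by simpa using h0)
          | succ m ihm =>
            intro h0
            by_cases hm' : f₀ ^ m = 0
            · exact ihm hm'
            · exfalso
              obtain ⟨w, hw⟩ : ∃ w, (f₀ ^ m) w ≠ 0 := by
                by_contra hc
                push_neg at hc
                exact hm' (LinearMap.ext fun x => by simpa using hc x)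
              have : (f₀ ^ m) w ∈ W := by
                rw [hW, LinearMap.mem_ker, ← Module.End.mul_apply, ← pow_succ']
                rw [h0]; rfl
              rw [hbot, Submodule.mem_bot] at this
              exact hw this
        exact hf₀ (this m hm)
      have hWnt : Nontrivial W := Submodule.nontrivial_iff_ne_bot.mpr hWne_bot
      have hWrank : Module.finrank F W ≤ n := by
        have : Module.finrank F W < Module.finrank F V :=
          Submodule.finrank_lt hWne_top
        omega
      have hinv : ∀ f ∈ S, ∀ x ∈ W, f x ∈ W := by
        intro f hf x hx
        rw [hW, LinearMap.mem_ker, ← Module.End.mul_apply, hcomm f₀ hf₀S f hf,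
          Module.End.mul_apply]
        rw [hW, LinearMap.mem_ker] at hx
        rw [hx, map_zero]
      set S' : Set (Module.End F W) :=
        {g | ∃ f, ∃ hf : f ∈ S, g = LinearMap.restrict f (hinv f hf)} with hS'
      have hcomm' : ∀ g ∈ S', ∀ g' ∈ S', g * g' = g' * g := by
        rintro g ⟨f, hf, rfl⟩ g' ⟨f', hf', rfl⟩
        ext x
        have : f (f' x) = f' (f x) := by
          have := congrArg (fun h : Module.End F V => h (x : V)) (hcomm f hf f' hf')
          simpa using this
        simp only [Module.End.mul_apply, LinearMap.restrict_apply]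
        exact this
      have hnil' : ∀ g ∈ S', IsNilpotent g := by
        rintro g ⟨f, hf, rfl⟩
        obtain ⟨m, hm⟩ := hnil f hf
        refine ⟨m, ?_⟩
        rw [Module.End.pow_restrict]
        ext x
        simp only [LinearMap.restrict_apply, hm]
        rfl
      obtain ⟨w, hw0, hwker⟩ := ih W hWrank hWnt S' hcomm' hnil'
      refine ⟨(w : V), by simpa using hw0, ?_⟩
      intro f hf
      have := hwker (LinearMap.restrict f (hinv f hf)) ⟨f, hf, rfl⟩
      have := congrArg (Subtype.val) this
      simpa [LinearMap.restrict_apply] using this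


section Key

variable {A : LieIdeal F L}

lemma exists_key (hA : IsAtom A) (hC : cent A ≠ ⊤) :
    ∃ k : L,
      (∀ a ∈ A, ∀ n : ℕ, ((ad F L k) ^ n) a = 0 → a = 0) ∧
      (∀ a ∈ A, ∃ b ∈ A, ⁅k, b⁆ = a) ∧
      (∀ x : L, ((ad F L k) ^ 2) x ∈ cent A) := by
  classical
  -- Step 1: a minimal ideal strictly containing the centraliser
  obtain ⟨K, hCK, hKmin⟩ : ∃ K : LieIdeal F L, cent A < K ∧
      ∀ J : LieIdeal F L, cent A < J → Module.finrank F K ≤ Module.finrank F J := by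
    set s : Set ℕ := {n | ∃ K : LieIdeal F L, cent A < K ∧ Module.finrank F K = n} with hs
    have hsne : s.Nonempty := ⟨_, ⊤, lt_top_iff_ne_top.mpr hC, rfl⟩
    obtain ⟨K, hK, hKn⟩ := Nat.sInf_mem hsne
    exact ⟨K, hK, fun J hJ => hKn ▸ Nat.sInf_le ⟨J, hJ, rfl⟩⟩
  -- Step 2: ⁅K, K⁆ ⊆ C
  have hKK : ∀ x ∈ K, ∀ y ∈ K, ⁅x, y⁆ ∈ cent A := by
    have hDle : ⁅K, K⁆ ⊔ cent A ≤ K := sup_le (LieSubmodule.lie_le_right K K) hCK.le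
    by_cases hDd : ⁅K, K⁆ ⊔ cent A = K
    · exfalso
      have hrec : ∀ m : ℕ, K ≤ LieAlgebra.derivedSeriesOfIdeal F L m K ⊔ cent A := by
        intro m
        induction m with
        | zero => rw [LieAlgebra.derivedSeriesOfIdeal_zero]; exact le_sup_left
        | succ m ihm =>
          set Dm := LieAlgebra.derivedSeriesOfIdeal F L m K with hDm
          have h1 : (⁅K, K⁆ : LieIdeal F L) ≤ ⁅Dm ⊔ cent A, Dm ⊔ cent A⁆ :=
            LieSubmodule.mono_lie ihm ihm
          have h2 : (⁅Dm ⊔ cent A, Dm ⊔ cent A⁆ : LieIdeal F L)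
              ≤ ⁅Dm, Dm⁆ ⊔ cent A := by
            rw [LieSubmodule.sup_lie, LieSubmodule.lie_sup, LieSubmodule.lie_sup]
            refine sup_le (sup_le le_sup_left ?_) (sup_le ?_ ?_)
            · exact le_trans (LieSubmodule.lie_le_right _ _) le_sup_right
            · exact le_trans (LieSubmodule.lie_le_left _ _) le_sup_right
            · exact le_trans (LieSubmodule.lie_le_left _ _) le_sup_right
          calc K = ⁅K, K⁆ ⊔ cent A := hDd.symm
            _ ≤ (⁅Dm, Dm⁆ ⊔ cent A) ⊔ cent A := sup_le_sup_right (le_trans h1 h2) _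
            _ = LieAlgebra.derivedSeriesOfIdeal F L (m+1) K ⊔ cent A := by
                rw [sup_assoc, sup_idem, LieAlgebra.derivedSeriesOfIdeal_succ]
      obtain ⟨j, hj⟩ := (LieAlgebra.IsSolvable.solvable (R := F) (L := L))
      have : K ≤ cent A := by
        have h3 := hrec j
        have h4 : LieAlgebra.derivedSeriesOfIdeal F L j K ≤ ⊥ := by
          calc LieAlgebra.derivedSeriesOfIdeal F L j K
              ≤ LieAlgebra.derivedSeries F L j := LieAlgebra.derivedSeriesOfIdeal_mono le_top j
            _ = ⊥ := hj
        calc K ≤ LieAlgebra.derivedSeriesOfIdeal F L j K ⊔ cent A := h3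
          _ ≤ ⊥ ⊔ cent A := sup_le_sup_right h4 _
          _ = cent A := bot_sup_eq _
      exact hCK.not_ge this
    · have hlt : ⁅K, K⁆ ⊔ cent A < K := lt_of_le_of_ne hDle hDd
      rcases eq_or_lt_of_le (le_sup_right : cent A ≤ ⁅K, K⁆ ⊔ cent A) with heq | hlt2
      · intro x hx y hy
        have h5 : ⁅x, y⁆ ∈ (⁅K, K⁆ : LieIdeal F L) := LieSubmodule.lie_mem_lie hx hy
        have h6 : (⁅K, K⁆ : LieIdeal F L) ≤ cent A := heq ▸ le_sup_left
        exact h6 h5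
      · exfalso
        have h7 := hKmin _ hlt2
        have h8 : Module.finrank F ↥(⁅K, K⁆ ⊔ cent A) < Module.finrank F K := by
          apply Submodule.finrank_lt_finrank_of_lt
          rw [lt_iff_le_and_ne]
          refine ⟨(LieSubmodule.toSubmodule_le_toSubmodule _ _).mpr hlt.le, ?_⟩
          intro he
          exact hDd (by rwa [LieSubmodule.toSubmodule_inj] at he)
        omega
  -- commutation of K-elements on A
  have hcomm2 : ∀ k₁ ∈ K, ∀ k₂ ∈ K, ∀ a ∈ A, ⁅k₁, ⁅k₂, a⁆⁆ = ⁅k₂, ⁅k₁, a⁆⁆ := by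
    intro k₁ hk₁ k₂ hk₂ a ha
    have h0 : ⁅(⁅k₁, k₂⁆ : L), a⁆ = 0 := ((mem_cent A).mp (hKK k₁ hk₁ k₂ hk₂)) a ha
    have h1 := lie_lie k₁ k₂ a
    rw [h0] at h1
    exact sub_eq_zero.mp h1.symm
  -- invariance of A under ad
  have hAinv : ∀ k' : L, ∀ x ∈ (A : Submodule F L), (ad F L k') x ∈ (A : Submodule F L) := by
    intro k' x hx
    exact A.lie_mem hx
  have hKneg : ∀ y : L, ∀ z ∈ K, ⁅z, y⁆ ∈ K := by
    intro y z hz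
    rw [← lie_skew]
    exact neg_mem (K.lie_mem hz)
  -- Step 3a: some element of K acts non-nilpotently on A
  obtain ⟨k, hkK, hnn⟩ : ∃ k ∈ K, ¬ ∀ a ∈ A, ∃ n : ℕ, ((ad F L k) ^ n) a = 0 := by
    by_contra hcon
    push_neg at hcon
    have hAne : (A : Submodule F L) ≠ ⊥ := by
      intro hb
      exact hA.1 ((LieSubmodule.toSubmodule_eq_bot _).mp hb)
    have hnt : Nontrivial ↥(A : Submodule F L) := Submodule.nontrivial_iff_ne_bot.mpr hAne
    set S : Set (Module.End F ↥(A : Submodule F L)) :=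
      {g | ∃ k, ∃ _ : k ∈ K, g = (ad F L k).restrict (hAinv k)} with hS
    have hc : ∀ f ∈ S, ∀ g ∈ S, f * g = g * f := by
      rintro f ⟨k₁, hk₁, rfl⟩ g ⟨k₂, hk₂, rfl⟩
      ext x
      simp only [Module.End.mul_apply, LinearMap.restrict_apply, ad_apply]
      exact hcomm2 k₁ hk₁ k₂ hk₂ (x : L) x.2
    have hn : ∀ f ∈ S, IsNilpotent f := by
      rintro f ⟨k₁, hk₁, rfl⟩
      apply ptNilp
      intro v
      obtain ⟨n, hnv⟩ := hcon k₁ hk₁ (v : L) v.2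
      refine ⟨n, ?_⟩
      rw [Module.End.pow_restrict]
      exact Subtype.ext hnv
    obtain ⟨v, hv0, hvker⟩ :=
      commKer (Module.finrank F ↥(A : Submodule F L)) ↥(A : Submodule F L) le_rfl hnt S hc hn
    -- the common kernel is a nonzero ideal contained in A, hence equals A
    set W : LieIdeal F L :=
      { carrier := {x : L | x ∈ A ∧ ∀ k' ∈ K, ⁅k', x⁆ = 0}
        add_mem' := by
          rintro x y ⟨hxA, hx⟩ ⟨hyA, hy⟩
          exact ⟨add_mem hxA hyA, fun k' hk' => by rw [lie_add, hx k' hk', hy k' hk', add_zero]⟩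
        zero_mem' := ⟨zero_mem A, fun k' _ => lie_zero k'⟩
        smul_mem' := by
          rintro c x ⟨hxA, hx⟩
          exact ⟨SMulMemClass.smul_mem c hxA, fun k' hk' => by rw [lie_smul, hx k' hk', smul_zero]⟩
        lie_mem := by
          rintro y x ⟨hxA, hx⟩
          refine ⟨A.lie_mem hxA, fun k' hk' => ?_⟩
          rw [leibniz_lie, hx _ (hKneg y k' hk'), hx k' hk', lie_zero, add_zero] } with hW
    have hWA : W ≤ A := fun x hx => hx.1
    have hWne : W ≠ ⊥ := by
      intro hb
      apply hv0
      have hvW : (v : L) ∈ W := by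
        refine ⟨v.2, fun k' hk' => ?_⟩
        have := hvker ((ad F L k').restrict (hAinv k')) ⟨k', hk', rfl⟩
        have := congrArg Subtype.val this
        exact this
      rw [hb, LieSubmodule.mem_bot] at hvW
      exact Subtype.ext hvW
    have hWeq : W = A := ((hA.le_iff.mp hWA).resolve_left hWne)
    have hKC : K ≤ cent A := by
      intro x hx
      refine (mem_cent A).mpr ?_
      intro a ha
      have haW : a ∈ W := hWeq ▸ ha
      exact haW.2 x hx
    exact hCK.not_ge hKC
  refine ⟨k, ?_⟩
  set D := ad F L k with hD
  have hDap : ∀ z : L, D z = ⁅k, z⁆ := fun z => rfl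
  -- basic facts
  have hpow_succ : ∀ (n : ℕ) (x : L), (D ^ (n+1)) x = (D ^ n) (D x) := by
    intro n x
    rw [pow_succ, Module.End.mul_apply]
  have hDA : ∀ a ∈ A, D a ∈ A := fun a ha => A.lie_mem ha
  have hDpowA : ∀ (n : ℕ), ∀ a ∈ A, (D ^ n) a ∈ A := by
    intro n
    induction n with
    | zero => intro a ha; simpa using ha
    | succ n ihn => intro a ha; rw [hpow_succ]; exact ihn _ (hDA a ha)
  have hvan : ∀ (n m : ℕ) (x : L), n ≤ m → (D ^ n) x = 0 → (D ^ m) x = 0 := by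
    intro n m x hnm hx
    rw [← Nat.sub_add_cancel hnm, pow_add, Module.End.mul_apply, hx, map_zero]
  have hC1 : ∀ (n : ℕ), ∀ k' ∈ K, ∀ a ∈ A, (D ^ n) ⁅k', a⁆ = ⁅k', (D ^ n) a⁆ := by
    intro n
    induction n with
    | zero => intro k' _ a _; simp
    | succ n ihn =>
      intro k' hk' a ha
      rw [hpow_succ, hpow_succ]
      have h1 : D ⁅k', a⁆ = ⁅k', D a⁆ := hcomm2 k hkK k' hk' a ha
      rw [h1]
      exact ihn k' hk' _ (hDA a ha)
  have hC2 : ∀ (n : ℕ), ∀ y : L, ∀ a ∈ A,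
      (D ^ (n+1)) ⁅y, a⁆ = ⁅y, (D ^ (n+1)) a⁆ + (n+1) • ((D ^ n) ⁅⁅k, y⁆, a⁆) := by
    intro n
    induction n with
    | zero =>
      intro y a ha
      simp only [zero_add, pow_one, pow_zero, Module.End.one_apply, one_smul]
      rw [hDap, hDap, leibniz_lie k y a]
      abel
    | succ n ihn =>
      intro y a ha
      have hky : (⁅k, y⁆ : L) ∈ K := hKneg y k hkK
      have e0 : (D ^ (n+2)) ⁅y, a⁆ = (D ^ (n+1)) (D ⁅y, a⁆) := hpow_succ _ _
      have e1 : D ⁅y, a⁆ = ⁅y, D a⁆ + ⁅⁅k, y⁆, a⁆ := by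
        rw [hDap, hDap, leibniz_lie k y a]
        abel
      rw [e0, e1, map_add]
      have e2 := ihn y (D a) (hDA a ha)
      rw [e2]
      have e3 : (D ^ n) ⁅⁅k, y⁆, D a⁆ = ⁅⁅k, y⁆, (D ^ (n+1)) a⁆ := by
        rw [hC1 n _ hky _ (hDA a ha), hpow_succ]
      have e4 : (D ^ (n+1)) ⁅⁅k, y⁆, a⁆ = ⁅⁅k, y⁆, (D ^ (n+1)) a⁆ :=
        hC1 (n+1) _ hky a ha
      rw [e3, e4, ← hpow_succ]
      rw [succ_nsmul (⁅(⁅k, y⁆ : L), (D ^ (n+1)) a⁆) (n+1)]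
      abel
  -- Step 3b : injectivity of D on A
  have hinj : ∀ a ∈ A, ∀ n : ℕ, (D ^ n) a = 0 → a = 0 := by
    set U : LieIdeal F L :=
      { carrier := {x : L | x ∈ A ∧ ∃ n : ℕ, (D ^ n) x = 0}
        add_mem' := by
          rintro x y ⟨hxA, n, hx⟩ ⟨hyA, m, hy⟩
          refine ⟨add_mem hxA hyA, max n m, ?_⟩
          rw [map_add, hvan n _ x (le_max_left n m) hx, hvan m _ y (le_max_right n m) hy,
            add_zero]
        zero_mem' := ⟨zero_mem A, 0, map_zero _⟩
        smul_mem' := by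
          rintro c x ⟨hxA, n, hx⟩
          exact ⟨SMulMemClass.smul_mem c hxA, n, by rw [map_smul, hx, smul_zero]⟩
        lie_mem := by
          rintro y x ⟨hxA, n, hx⟩
          refine ⟨A.lie_mem hxA, 2*n+2, ?_⟩
          have h1 := hC2 (2*n+1) y x hxA
          have h2 : (D ^ (2*n+1+1)) x = 0 := hvan n _ x (by omega) hx
          have hky : (⁅k, y⁆ : L) ∈ K := hKneg y k hkK
          have h3 : (D ^ (2*n+1)) ⁅⁅k, y⁆, x⁆ = 0 := by
            rw [hC1 _ _ hky x hxA, hvan n _ x (by omega) hx, lie_zero]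
          have : (2*n+2) = (2*n+1)+1 := by omega
          rw [this, h1, h2, h3, lie_zero, smul_zero, add_zero] } with hU
    have hUA : U ≤ A := fun x hx => hx.1
    have hUne : U ≠ A := by
      intro hUeq
      apply hnn
      intro a ha
      have : a ∈ U := hUeq ▸ ha
      exact this.2
    have hUbot : U = ⊥ := (hA.le_iff.mp hUA).resolve_right hUne
    intro a ha n hn
    have : a ∈ U := ⟨ha, n, hn⟩
    rw [hUbot, LieSubmodule.mem_bot] at this
    exact this
  refine ⟨hinj, ?_, ?_⟩
  · -- surjectivity on A
    set T : Module.End F ↥(A : Submodule F L) := D.restrict (hAinv k) with hT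
    have hTinj : Function.Injective T := by
      rw [← LinearMap.ker_eq_bot]
      rw [Submodule.eq_bot_iff]
      rintro v hv
      rw [LinearMap.mem_ker] at hv
      have hv1 : D (v : L) = 0 := by
        have := congrArg Subtype.val hv
        exact this
      have : (D ^ 1) (v : L) = 0 := by simpa using hv1
      have := hinj (v : L) v.2 1 this
      exact Subtype.ext this
    have hTsurj : Function.Surjective T := LinearMap.injective_iff_surjective.mp hTinj
    intro a ha
    obtain ⟨b, hb⟩ := hTsurj ⟨a, ha⟩
    refine ⟨(b : L), b.2, ?_⟩
    have := congrArg Subtype.val hb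
    exact this
  · -- (ad k)^2 maps into the centraliser
    intro x
    have h1 : (D ^ 2) x = ⁅k, ⁅k, x⁆⁆ := by
      rw [hpow_succ 1 x]
      simp [hD]
    rw [h1]
    exact hKK k hkK _ (hKneg x k hkK)


end Key

section Main

variable {A : LieIdeal F L}

/-- Fitting-style decomposition : `L = engel(k) + C`. -/
lemma fitting_decomp (hsq : ∀ x : L, ((ad F L k) ^ 2) x ∈ cent A) :
    ∀ x : L, ∃ y ∈ LieSubalgebra.engel F k, ∃ c ∈ cent A, x = y + c := by
  obtain ⟨n₀, hn₀⟩ := Filter.eventually_atTop.mp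
    (LinearMap.eventually_isCompl_ker_pow_range_pow (ad F L k))
  set N := 2 + n₀ with hN
  have hcompl := hn₀ N (by omega)
  intro x
  have hx : x ∈ LinearMap.ker ((ad F L k) ^ N) ⊔ LinearMap.range ((ad F L k) ^ N) := by
    rw [codisjoint_iff.mp hcompl.codisjoint]
    exact Submodule.mem_top
  obtain ⟨u, hu, v, hv, rfl⟩ := Submodule.mem_sup.mp hx
  refine ⟨u, ?_, v, ?_, rfl⟩
  · rw [LieSubalgebra.mem_engel_iff]
    exact ⟨N, hu⟩
  · obtain ⟨w, rfl⟩ := hv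
    have : ((ad F L k) ^ N) w = ((ad F L k) ^ 2) (((ad F L k) ^ n₀) w) := by
      rw [← Module.End.mul_apply, ← pow_add, hN]
    rw [this]
    exact hsq _

variable (B₀ : LieIdeal F L)

lemma B_pow_mem {b : L} (hb : b ∈ B₀) (n : ℕ) : ((ad F L k) ^ n) b ∈ B₀ := by
  induction n with
  | zero => simpa using hb
  | succ n ihn =>
    rw [pow_succ', Module.End.mul_apply]
    exact B₀.lie_mem ihn

/-- Elements of the Engel subalgebra centralising `A` lie in `B₀`. -/
lemma engel_inter_cent
    (hinj : ∀ a ∈ A, ∀ n : ℕ, ((ad F L k) ^ n) a = 0 → a = 0)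
    (hB2 : ∀ x ∈ cent A, ∃ a ∈ A, ∃ b ∈ B₀, x = a + b)
    (hB3 : ∀ x : L, x ∈ A → x ∈ B₀ → x = 0) :
    ∀ x ∈ LieSubalgebra.engel F k, x ∈ cent A → x ∈ B₀ := by
  intro x hxE hxC
  obtain ⟨n, hn⟩ := (LieSubalgebra.mem_engel_iff F k x).mp hxE
  obtain ⟨a, ha, b, hb, rfl⟩ := hB2 x hxC
  have h1 : ((ad F L k) ^ n) a + ((ad F L k) ^ n) b = 0 := by
    rw [← map_add]; exact hn
  have h2 : ((ad F L k) ^ n) a = -((ad F L k) ^ n) b := by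
    rw [eq_neg_iff_add_eq_zero]; exact h1
  have h3 : ((ad F L k) ^ n) a ∈ B₀ := h2 ▸ neg_mem (B_pow_mem B₀ hb n)
  have h4 : ((ad F L k) ^ n) a ∈ A := by
    clear h1 h2 h3 hn
    induction n with
    | zero => simpa using ha
    | succ n ihn =>
      rw [pow_succ', Module.End.mul_apply]
      exact A.lie_mem ihn
  have h5 : ((ad F L k) ^ n) a = 0 := hB3 _ h4 h3
  have h6 : a = 0 := hinj a ha n h5
  rw [h6, zero_add]
  exact hb

/-- The reference complement `engel(k) + B₀`. -/
def MB (k : L) (B₀ : LieIdeal F L) : LieSubalgebra F L where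
  carrier := {x : L | ∃ y ∈ LieSubalgebra.engel F k, ∃ b ∈ B₀, x = y + b}
  add_mem' := by
    rintro x x' ⟨y, hy, b, hb, rfl⟩ ⟨y', hy', b', hb', rfl⟩
    exact ⟨y + y', add_mem hy hy', b + b', add_mem hb hb', by abel⟩
  zero_mem' := ⟨0, zero_mem _, 0, zero_mem _, by simp⟩
  smul_mem' := by
    rintro c x ⟨y, hy, b, hb, rfl⟩
    exact ⟨c • y, (LieSubalgebra.engel F k).smul_mem c hy, c • b, SMulMemClass.smul_mem c hb, by
      rw [smul_add]⟩
  lie_mem' := by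
    rintro x x' ⟨y, hy, b, hb, rfl⟩ ⟨y', hy', b', hb', rfl⟩
    refine ⟨⁅y, y'⁆, LieSubalgebra.lie_mem _ hy hy', ⁅y, b'⁆ + ⁅b, y'⁆ + ⁅b, b'⁆, ?_, by
      rw [lie_add, add_lie, add_lie]; abel⟩
    have h1 : ⁅y, b'⁆ ∈ B₀ := B₀.lie_mem hb'
    have h2 : ⁅b, y'⁆ ∈ B₀ := by
      rw [← lie_skew]; exact neg_mem (B₀.lie_mem hb)
    have h3 : ⁅b, b'⁆ ∈ B₀ := B₀.lie_mem hb'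
    exact add_mem (add_mem h1 h2) h3

lemma mem_MB_iff {k : L} {B₀ : LieIdeal F L} {x : L} :
    x ∈ MB k B₀ ↔ ∃ y ∈ LieSubalgebra.engel F k, ∃ b ∈ B₀, x = y + b := Iff.rfl

lemma B_le_MB : ∀ b ∈ B₀, b ∈ MB k B₀ :=
  fun b hb => ⟨0, zero_mem _, b, hb, (zero_add b).symm⟩

lemma MB_decomp (hsq : ∀ x : L, ((ad F L k) ^ 2) x ∈ cent A)
    (hB2 : ∀ x ∈ cent A, ∃ a ∈ A, ∃ b ∈ B₀, x = a + b) :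
    ∀ x : L, ∃ a ∈ A, ∃ m ∈ MB k B₀, x = a + m := by
  intro x
  obtain ⟨y, hy, c, hc, rfl⟩ := fitting_decomp hsq x
  obtain ⟨a, ha, b, hb, rfl⟩ := hB2 c hc
  exact ⟨a, ha, y + b, ⟨y, hy, b, hb, rfl⟩, by abel⟩

lemma MB_disj (hA : IsAtom A)
    (hinj : ∀ a ∈ A, ∀ n : ℕ, ((ad F L k) ^ n) a = 0 → a = 0)
    (hB1 : ∀ b ∈ B₀, b ∈ cent A)
    (hB2 : ∀ x ∈ cent A, ∃ a ∈ A, ∃ b ∈ B₀, x = a + b)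
    (hB3 : ∀ x : L, x ∈ A → x ∈ B₀ → x = 0) :
    ∀ x : L, x ∈ A → x ∈ MB k B₀ → x = 0 := by
  rintro x hxA ⟨y, hy, b, hb, rfl⟩
  have hyC : y ∈ cent A := by
    have h1 : (y + b) - b ∈ cent A := sub_mem (A_le_cent hA _ hxA) (hB1 b hb)
    simpa using h1
  have hyB : y ∈ B₀ := engel_inter_cent B₀ hinj hB2 hB3 y hy hyC
  exact hB3 _ hxA (add_mem hyB hb)

lemma MB_inter_cent (hA : IsAtom A)
    (hinj : ∀ a ∈ A, ∀ n : ℕ, ((ad F L k) ^ n) a = 0 → a = 0)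
    (hB1 : ∀ b ∈ B₀, b ∈ cent A)
    (hB2 : ∀ x ∈ cent A, ∃ a ∈ A, ∃ b ∈ B₀, x = a + b)
    (hB3 : ∀ x : L, x ∈ A → x ∈ B₀ → x = 0) :
    ∀ x ∈ MB k B₀, x ∈ cent A → x ∈ B₀ := by
  rintro x ⟨y, hy, b, hb, rfl⟩ hxC
  have hyC : y ∈ cent A := by
    have h1 : (y + b) - b ∈ cent A := sub_mem hxC (hB1 b hb)
    simpa using h1
  exact add_mem (engel_inter_cent B₀ hinj hB2 hB3 y hy hyC) hb

lemma compl_finrank {M : LieSubalgebra F L}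
    (hM1 : ∀ x : L, ∃ a ∈ A, ∃ m ∈ M, x = a + m)
    (hM2 : ∀ x : L, x ∈ A → x ∈ M → x = 0) :
    Module.finrank F M.toSubmodule
      = Module.finrank F L - Module.finrank F (A : Submodule F L) := by
  have h := compl_isCompl hM1 hM2
  have h2 := Submodule.finrank_add_eq_of_isCompl h
  omega

/-- The key conjugation lemma : every complement with `M ∩ C ⊇ B₀` is conjugate
to the reference complement `MB k B₀`. -/
lemma conj_to_MB (hA : IsAtom A)
    (hinj : ∀ a ∈ A, ∀ n : ℕ, ((ad F L k) ^ n) a = 0 → a = 0)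
    (hsurj : ∀ a ∈ A, ∃ b ∈ A, ⁅k, b⁆ = a)
    (hsq : ∀ x : L, ((ad F L k) ^ 2) x ∈ cent A)
    (hB1 : ∀ b ∈ B₀, b ∈ cent A)
    (hB2 : ∀ x ∈ cent A, ∃ a ∈ A, ∃ b ∈ B₀, x = a + b)
    (hB3 : ∀ x : L, x ∈ A → x ∈ B₀ → x = 0)
    {M : LieSubalgebra F L}
    (hM1 : ∀ x : L, ∃ a ∈ A, ∃ m ∈ M, x = a + m)
    (hM2 : ∀ x : L, x ∈ A → x ∈ M → x = 0)
    (hBM : ∀ b ∈ B₀, b ∈ M) :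
    ∃ x ∈ A, (⇑((1 : Module.End F L) + ad F L x)) '' ((MB k B₀ : LieSubalgebra F L) : Set L)
      = (M : Set L) := by
  classical
  have h := compl_isCompl hM1 hM2
  obtain ⟨x, hxA, hxk⟩ := hsurj (gam h k) (gam_mem h k)
  refine ⟨x, hxA, ?_⟩
  set βf : L → L := fun y => gam h y - ⁅y, x⁆ with hβf
  have hβA : ∀ y : L, βf y ∈ A := fun y => sub_mem (gam_mem h y) (A.lie_mem hxA)
  have hβadd : ∀ y z : L, βf (y + z) = βf y + βf z := by
    intro y z
    simp only [hβf, map_add, add_lie]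
    abel
  have hβk : βf k = 0 := by
    simp only [hβf, hxk, sub_self]
  have hβD : ∀ y : L, βf ⁅k, y⁆ = ⁅k, βf y⁆ := by
    intro y
    simp only [hβf]
    rw [gam_cocycle h hA hM1 k y]
    have e1 : ⁅(⁅k, y⁆ : L), x⁆ = ⁅k, ⁅y, x⁆⁆ - ⁅y, gam h k⁆ := by
      rw [lie_lie, hxk]
    have e2 : ⁅gam h k, y⁆ = -⁅y, gam h k⁆ := (lie_skew _ _).symm
    rw [e1, e2, lie_sub]
    abel
  have hβpow : ∀ (n : ℕ) (y : L), βf (((ad F L k) ^ n) y) = ((ad F L k) ^ n) (βf y) := by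
    intro n
    induction n with
    | zero => intro y; simp
    | succ n ihn =>
      intro y
      have hps : ∀ z : L, ((ad F L k) ^ (n+1)) z = ((ad F L k) ^ n) ((ad F L k) z) := by
        intro z; rw [pow_succ, Module.End.mul_apply]
      rw [hps, ihn (ad F L k y)]
      have : βf ((ad F L k) y) = (ad F L k) (βf y) := hβD y
      rw [this, ← hps]
  have hβE : ∀ y ∈ LieSubalgebra.engel F k, βf y = 0 := by
    intro y hy
    obtain ⟨n, hn⟩ := (LieSubalgebra.mem_engel_iff F k y).mp hy
    have h1 : ((ad F L k) ^ n) (βf y) = 0 := by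
      rw [← hβpow n y, hn]
      simp [hβf]
    exact hinj _ (hβA y) n h1
  have hβB : ∀ b ∈ B₀, βf b = 0 := by
    intro b hb
    have h1 : gam h b = 0 := gam_right h (hBM b hb)
    have h2 : ⁅b, x⁆ = 0 := (hB1 b hb) x hxA
    simp [hβf, h1, h2]
  have hβMB : ∀ z ∈ MB k B₀, βf z = 0 := by
    rintro z ⟨y, hy, b, hb, rfl⟩
    rw [hβadd, hβE y hy, hβB b hb, add_zero]
  -- the image is contained in M
  have himg : ∀ z ∈ MB k B₀, ((1 : Module.End F L) + ad F L x) z ∈ M := by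
    intro z hz
    have h1 : ((1 : Module.End F L) + ad F L x) z = z + ⁅x, z⁆ := by
      simp [LinearMap.add_apply]
    rw [h1]
    rw [← gam_eq_zero_iff h hM1]
    rw [map_add, gam_left h (lie_mem_A hxA)]
    have h2 : (⁅x, z⁆ : L) = -⁅z, x⁆ := (lie_skew _ _).symm
    have h3 := hβMB z hz
    simp only [hβf] at h3
    rw [h2]
    rw [sub_eq_zero] at h3  -- h3 : gam h z = ⁅z, x⁆
    rw [h3]
    abel
  -- conclude by dimensions
  set S : Submodule F L := Submodule.map ((1 : Module.End F L) + ad F L x)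
    (MB k B₀).toSubmodule with hS
  have hSle : S ≤ M.toSubmodule := by
    rintro _ ⟨z, hz, rfl⟩
    exact himg z hz
  have hre : Module.finrank F S = Module.finrank F (MB k B₀).toSubmodule := by
    have hcoe : ((expEquiv hA hxA : L ≃ₗ[F] L) : L →ₗ[F] L)
        = (1 : Module.End F L) + ad F L x := rfl
    rw [hS, ← hcoe]
    exact LinearEquiv.finrank_map_eq _ _
  have hrM : Module.finrank F M.toSubmodule
      = Module.finrank F L - Module.finrank F (A : Submodule F L) :=
    compl_finrank hM1 hM2
  have hrMB : Module.finrank F (MB k B₀).toSubmodule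
      = Module.finrank F L - Module.finrank F (A : Submodule F L) :=
    compl_finrank (MB_decomp B₀ hsq hB2) (MB_disj B₀ hA hinj hB1 hB2 hB3)
  have hSeq : S = M.toSubmodule :=
    Submodule.eq_of_le_of_finrank_le hSle (by omega)
  have hset : (⇑((1 : Module.End F L) + ad F L x)) '' ((MB k B₀ : LieSubalgebra F L) : Set L)
      = (S : Set L) := by
    rw [hS]
    rfl
  rw [hset, hSeq]
  rfl

end Main

section Assembly

variable {A : LieIdeal F L}

/-- The ideal `M ∩ C_L(A)` associated with a complement `M`. -/
def BId (hA : IsAtom A) (M : LieSubalgebra F L)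
    (hM1 : ∀ x : L, ∃ a ∈ A, ∃ m ∈ M, x = a + m) : LieIdeal F L where
  carrier := {x : L | x ∈ M ∧ x ∈ cent A}
  add_mem' := fun hx hy => ⟨add_mem hx.1 hy.1, add_mem hx.2 hy.2⟩
  zero_mem' := ⟨zero_mem _, zero_mem _⟩
  smul_mem' := fun c x hx => ⟨M.smul_mem c hx.1, SMulMemClass.smul_mem c hx.2⟩
  lie_mem := by
    rintro y x ⟨hxM, hxC⟩
    obtain ⟨a, ha, m, hm, rfl⟩ := hM1 y
    have h1 : ⁅a, x⁆ = 0 := by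
      rw [← lie_skew, hxC a ha, neg_zero]
    have h2 : (⁅a + m, x⁆ : L) = ⁅m, x⁆ := by rw [add_lie, h1, zero_add]
    show ⁅a + m, x⁆ ∈ {x : L | x ∈ M ∧ x ∈ cent A}
    rw [h2]
    exact ⟨M.lie_mem hm hxM, (cent A).lie_mem hxC⟩

lemma mem_BId {hA : IsAtom A} {M : LieSubalgebra F L}
    {hM1 : ∀ x : L, ∃ a ∈ A, ∃ m ∈ M, x = a + m} {x : L} :
    x ∈ BId hA M hM1 ↔ x ∈ M ∧ x ∈ cent A := Iff.rfl

lemma BId_spec2 (hA : IsAtom A) (M : LieSubalgebra F L)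
    (hM1 : ∀ x : L, ∃ a ∈ A, ∃ m ∈ M, x = a + m) :
    ∀ x ∈ cent A, ∃ a ∈ A, ∃ b ∈ BId hA M hM1, x = a + b := by
  intro x hx
  obtain ⟨a, ha, m, hm, rfl⟩ := hM1 x
  refine ⟨a, ha, m, ⟨hm, ?_⟩, rfl⟩
  have h1 : (a + m) - a ∈ cent A := sub_mem hx (A_le_cent hA a ha)
  simpa using h1

end Assembly

end Stitz

open Stitz

/-- (Stitzinger) Let `A` be a minimal ideal of a finite-dimensional solvable Lie algebra `L`.
There is a bijection between the conjugacy classes, under the group `I(L:A)` generated by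
`id + ad a` (`a ∈ A`), of complements to `A` in `L`, and the ideals of `L` which complement
`A` inside the centraliser `C_L(A)`.  We express this as a surjection from complements to
such ideals whose fibres are exactly the conjugacy classes. -/
theorem bijection_conjClasses_complements (F : Type*) [Field F]
    (L : Type*) [LieRing L] [LieAlgebra F L] [FiniteDimensional F L]
    [LieAlgebra.IsSolvable L]
    (A : LieIdeal F L) (hA : IsAtom A) :
    ∃ f : {M : LieSubalgebra F L //
            (∀ x : L, ∃ a ∈ A, ∃ m ∈ M, x = a + m) ∧ (∀ x : L, x ∈ A → x ∈ M → x = 0)} →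
          {B : LieIdeal F L //
            (∀ b ∈ B, ∀ a ∈ A, ⁅b, a⁆ = 0) ∧
            (∀ x : L, (∀ a ∈ A, ⁅x, a⁆ = 0) → ∃ a ∈ A, ∃ b ∈ B, x = a + b) ∧
            (∀ x : L, x ∈ A → x ∈ B → x = 0)},
      Function.Surjective f ∧
      ∀ M K, f M = f K ↔
        ∃ l : List L, (∀ a ∈ l, a ∈ A) ∧
          ((K : LieSubalgebra F L) : Set L) =
            ⇑((l.map (fun a => (1 : Module.End F L) + LieAlgebra.ad F L a)).prod) ''
              ((M : LieSubalgebra F L) : Set L) := by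
  classical
  refine ⟨fun M => ⟨BId hA M.1 M.2.1,
      fun b hb => hb.2,
      fun x hx => BId_spec2 hA M.1 M.2.1 x hx,
      fun x hxA hxB => M.2.2 x hxA hxB.1⟩, ?_, ?_⟩
  · -- surjectivity
    rintro ⟨B, hB1, hB2, hB3⟩
    have hB1' : ∀ b ∈ B, b ∈ cent A := fun b hb => hB1 b hb
    by_cases hCtop : ∀ x : L, x ∈ cent A
    · -- the central case : B itself is a complement
      refine ⟨⟨LieIdeal.toLieSubalgebra F L B, ?_, ?_⟩, ?_⟩
      · intro x
        obtain ⟨a, ha, b, hb, rfl⟩ := hB2 x (hCtop x)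
        exact ⟨a, ha, b, hb, rfl⟩
      · exact fun x hxA hxB => hB3 x hxA hxB
      · apply Subtype.ext
        apply SetLike.ext
        intro x
        constructor
        · rintro ⟨hxM, _⟩
          exact hxM
        · intro hxB
          exact ⟨hxB, hB1' x hxB⟩
    · -- the non-central case : use the reference complement `MB k B`
      have hCne : cent A ≠ ⊤ := by
        intro h
        exact hCtop (fun x => h ▸ LieSubmodule.mem_top x)
      obtain ⟨k, hinj, hsurj, hsq⟩ := exists_key hA hCne
      have hB2' : ∀ x ∈ cent A, ∃ a ∈ A, ∃ b ∈ B, x = a + b := fun x hx => hB2 x hx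
      refine ⟨⟨MB k B, MB_decomp B hsq hB2', MB_disj B hA hinj hB1' hB2' hB3⟩, ?_⟩
      apply Subtype.ext
      apply SetLike.ext
      intro x
      constructor
      · rintro ⟨hxM, hxC⟩
        exact MB_inter_cent B hA hinj hB1' hB2' hB3 x hxM hxC
      · intro hxB
        exact ⟨B_le_MB B x hxB, hB1' x hxB⟩
  · -- the fibres
    rintro ⟨M, hM1, hM2⟩ ⟨K, hK1, hK2⟩
    constructor
    · intro hfMK
      have hBeq : BId hA M hM1 = BId hA K hK1 := congrArg Subtype.val hfMK
      by_cases hCtop : ∀ x : L, x ∈ cent A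
      · -- central case : M = K and the empty list works
        have hMKeq : (K : Set L) = (M : Set L) := by
          ext x
          constructor
          · intro hx
            have : x ∈ BId hA K hK1 := ⟨hx, hCtop x⟩
            rw [← hBeq] at this
            exact this.1
          · intro hx
            have : x ∈ BId hA M hM1 := ⟨hx, hCtop x⟩
            rw [hBeq] at this
            exact this.1
        refine ⟨[], by simp, ?_⟩
        have h1 : ((List.map (fun a => (1 : Module.End F L) + LieAlgebra.ad F L a) []).prod)
            = (1 : Module.End F L) := by simp
        rw [h1]
        have h2 : ⇑(1 : Module.End F L) = id := funext fun x => rfl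
        rw [h2, Set.image_id]
        exact hMKeq
      · have hCne : cent A ≠ ⊤ := by
          intro h
          exact hCtop (fun x => h ▸ LieSubmodule.mem_top x)
        obtain ⟨k, hinj, hsurj, hsq⟩ := exists_key hA hCne
        set B₀ := BId hA M hM1 with hB₀
        have hB1 : ∀ b ∈ B₀, b ∈ cent A := fun b hb => hb.2
        have hB2 : ∀ x ∈ cent A, ∃ a ∈ A, ∃ b ∈ B₀, x = a + b :=
          fun x hx => BId_spec2 hA M hM1 x hx
        have hB3 : ∀ x : L, x ∈ A → x ∈ B₀ → x = 0 := fun x hxA hxB => hM2 x hxA hxB.1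
        have hBM : ∀ b ∈ B₀, b ∈ M := fun b hb => hb.1
        have hBK : ∀ b ∈ B₀, b ∈ K := by
          intro b hb
          have : b ∈ BId hA K hK1 := hBeq ▸ hb
          exact this.1
        obtain ⟨x₁, hx₁A, himgM⟩ :=
          conj_to_MB B₀ hA hinj hsurj hsq hB1 hB2 hB3 hM1 hM2 hBM
        obtain ⟨x₂, hx₂A, himgK⟩ :=
          conj_to_MB B₀ hA hinj hsurj hsq hB1 hB2 hB3 hK1 hK2 hBK
        refine ⟨[x₂ - x₁], ?_, ?_⟩
        · intro a ha
          rw [List.mem_singleton] at ha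
          rw [ha]
          exact sub_mem hx₂A hx₁A
        · have hprod : ((List.map (fun a => (1 : Module.End F L) + LieAlgebra.ad F L a)
              [x₂ - x₁]).prod) = (1 : Module.End F L) + LieAlgebra.ad F L (x₂ - x₁) := by
            simp
          rw [hprod, ← himgM, ← himgK]
          rw [← Set.image_comp]
          have hcomp : (⇑((1 : Module.End F L) + LieAlgebra.ad F L (x₂ - x₁)) ∘
              ⇑((1 : Module.End F L) + LieAlgebra.ad F L x₁))
              = ⇑((1 : Module.End F L) + LieAlgebra.ad F L x₂) := by
            have := exp_mul hA (sub_mem hx₂A hx₁A) hx₁A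
            rw [sub_add_cancel] at this
            rw [← this]
            rfl
          rw [hcomp]
    · rintro ⟨l, hl, himg⟩
      obtain ⟨hsA, hprod⟩ := exp_list_prod hA l hl
      rw [hprod] at himg
      set s := l.sum with hs
      apply Subtype.ext
      apply SetLike.ext
      intro x
      constructor
      · rintro ⟨hxM, hxC⟩
        have hfix : ((1 : Module.End F L) + LieAlgebra.ad F L s) x = x := by
          have h1 : (⁅s, x⁆ : L) = 0 := by
            rw [← lie_skew, hxC s hsA, neg_zero]
          simp [LinearMap.add_apply, h1]
        have hxK : x ∈ K := by
          have : x ∈ ((K : LieSubalgebra F L) : Set L) := by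
            rw [himg]
            exact ⟨x, hxM, hfix⟩
          exact this
        exact ⟨hxK, hxC⟩
      · rintro ⟨hxK, hxC⟩
        have : x ∈ ((K : LieSubalgebra F L) : Set L) := hxK
        rw [himg] at this
        obtain ⟨m, hm, hmx⟩ := this
        have hmx' : m + ⁅s, m⁆ = x := by
          simpa [LinearMap.add_apply] using hmx
        have hsm : (⁅s, m⁆ : L) = 0 := by
          have h1 : (⁅s, x⁆ : L) = ⁅s, m⁆ := by
            rw [← hmx', lie_add, ad_ad_eq_zero hA hsA hsA m, add_zero]
          have h2 : (⁅s, x⁆ : L) = 0 := by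
            rw [← lie_skew, hxC s hsA, neg_zero]
          rw [← h1, h2]
        have : m = x := by rw [← hmx', hsm, add_zero]
        rw [← this]
        exact ⟨hm, this ▸ hxC⟩
end

section
/- Let L be a finite-dimensional solvable Lie algebra over any field, and let M, K be two core-free maximal subalgebras of L. Then K = (id + ad a)(M) for some a ∈ A, where A is the unique minimal ideal of L; in particular M and K are conjugate under an inner automorphism of L. -/
open Module LieAlgebra

section AuxOps

variable {F : Type*} [Field F]

private lemma end_pow_mul {VV : Type*} [AddCommGroup VV] [Module F VV]
    (S T R : Module.End F VV) (h1 : S * T - T * S = R) (h2 : T * R = R * T) :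
    ∀ m : ℕ, T ^ (m + 1) * S = S * T ^ (m + 1) - (m + 1) • (R * T ^ m) := by
  have h1' : T * S = S * T - R := by rw [← h1]; abel
  intro m
  induction m with
  | zero => simpa using h1'
  | succ m ih =>
    have e1 : T ^ (m + 1 + 1) * S = T * (T ^ (m + 1) * S) := by
      rw [← mul_assoc, ← pow_succ']
    rw [e1, ih, mul_sub, ← mul_assoc, h1', mul_smul_comm, ← mul_assoc, h2, mul_assoc,
      ← pow_succ', sub_mul, mul_assoc, ← pow_succ']
    have e2 : (m + 1 + 1) • (R * T ^ (m + 1)) = (m+1) • (R * T ^ (m+1)) + R * T ^ (m+1) :=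
      succ_nsmul _ _
    rw [e2]; abel

private lemma ker_pow_stable {VV : Type*} [AddCommGroup VV] [Module F VV]
    [FiniteDimensional F VV] (S T R : Module.End F VV)
    (h1 : S * T - T * S = R) (h2 : T * R = R * T) (v : VV)
    (hv : (T ^ (finrank F VV)) v = 0) : (T ^ (finrank F VV)) (S v) = 0 := by
  set d := finrank F VV with hd
  rcases Nat.eq_zero_or_pos d with h0 | hpos
  · have : Subsingleton VV := by
      rw [← Module.finrank_zero_iff (R := F)]; omega
    exact Subsingleton.elim _ _
  · have key : (T ^ (2 * d)) (S v) = 0 := by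
      have h2d := end_pow_mul S T R h1 h2 (2 * d - 1)
      rw [Nat.sub_add_cancel (by omega)] at h2d
      have hv1 : (T ^ (2 * d)) v = 0 := by
        have e : 2 * d = d + d := by omega
        rw [e, pow_add, Module.End.mul_apply, hv, map_zero]
      have hv2 : (T ^ (2 * d - 1)) v = 0 := by
        have e : 2 * d - 1 = (d - 1) + d := by omega
        rw [e, pow_add, Module.End.mul_apply, hv, map_zero]
      calc (T ^ (2 * d)) (S v) = (T ^ (2*d) * S) v := rfl
        _ = S ((T ^ (2*d)) v) - (2*d) • (R ((T ^ (2*d-1)) v)) := by rw [h2d]; rfl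
        _ = 0 := by rw [hv1, hv2, map_zero, map_zero, smul_zero, sub_zero]
    have hmem : S v ∈ LinearMap.ker (T ^ (2 * d)) := key
    rw [Module.End.ker_pow_eq_ker_pow_finrank_of_le (by omega)] at hmem
    exact hmem

end AuxOps

section AuxLie

variable {F : Type*} [Field F] {L : Type*} [LieRing L] [LieAlgebra F L]

private lemma exists_atom_ideal [FiniteDimensional F L] [Nontrivial L] :
    ∃ A : LieIdeal F L, IsAtom A := by
  suffices h : ∀ n (I : LieIdeal F L), finrank F I.toSubmodule ≤ n → I ≠ ⊥ →
      ∃ A : LieIdeal F L, A ≤ I ∧ IsAtom A by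
    have htop : (⊤ : LieIdeal F L) ≠ ⊥ := by
      obtain ⟨x, y, hxy⟩ := exists_pair_ne L
      intro hh
      apply hxy
      have h1 : x ∈ (⊤ : LieIdeal F L) := trivial
      have h2 : y ∈ (⊤ : LieIdeal F L) := trivial
      rw [hh, LieSubmodule.mem_bot] at h1 h2
      rw [h1, h2]
    obtain ⟨A, _, hA⟩ := h (finrank F (⊤ : LieIdeal F L).toSubmodule) ⊤ le_rfl htop
    exact ⟨A, hA⟩
  intro n
  induction n with
  | zero =>
    intro I hle hne
    exfalso
    apply hne
    have : I.toSubmodule = ⊥ := by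
      rw [← Submodule.finrank_eq_zero (R := F)]; omega
    ext x
    simp only [LieSubmodule.mem_bot]
    rw [← LieSubmodule.mem_toSubmodule, this]
    simp
  | succ n ih =>
    intro I hle hne
    by_cases hmin : ∀ J : LieIdeal F L, J < I → J = ⊥
    · exact ⟨I, le_rfl, hne, hmin⟩
    · push_neg at hmin
      obtain ⟨J, hJI, hJne⟩ := hmin
      have hsub : J.toSubmodule < I.toSubmodule := by
        rcases lt_iff_le_and_ne.mp hJI with ⟨hle', hne'⟩
        refine lt_iff_le_and_ne.mpr ⟨fun x hx => hle' hx, fun hcontra => hne' ?_⟩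
        ext x
        rw [← LieSubmodule.mem_toSubmodule, ← LieSubmodule.mem_toSubmodule, hcontra]
      have hrank : finrank F J.toSubmodule ≤ n := by
        have := Submodule.finrank_lt_finrank_of_lt hsub
        omega
      obtain ⟨A, hAJ, hA⟩ := ih J hrank hJne
      exact ⟨A, hAJ.trans hJI.le, hA⟩

private lemma atom_abelian [LieAlgebra.IsSolvable L] (A : LieIdeal F L) (hA : IsAtom A) :
    ∀ a ∈ A, ∀ b ∈ A, ⁅a, b⁆ = (0 : L) := by
  have hbot : (⁅A, A⁆ : LieIdeal F L) = ⊥ := by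
    rcases lt_or_eq_of_le (LieSubmodule.lie_le_left A A) with hlt | heq
    · exact hA.2 _ hlt
    · exfalso
      have hall : ∀ k, LieAlgebra.derivedSeriesOfIdeal F L k A = A := by
        intro k
        induction k with
        | zero => simp
        | succ k ihk => rw [LieAlgebra.derivedSeriesOfIdeal_succ, ihk, heq]
      obtain ⟨k, hk⟩ := LieAlgebra.IsSolvable.solvable F L
      have hle : LieAlgebra.derivedSeriesOfIdeal F L k A ≤
          LieAlgebra.derivedSeriesOfIdeal F L k ⊤ :=
        LieAlgebra.derivedSeriesOfIdeal_le le_top le_rfl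
      rw [hall k] at hle
      rw [LieAlgebra.derivedSeries_def] at hk
      rw [hk] at hle
      exact hA.1 (le_bot_iff.mp hle)
  intro a ha b hb
  have hmem : ⁅a, b⁆ ∈ (⁅A, A⁆ : LieIdeal F L) := LieSubmodule.lie_mem_lie ha hb
  rw [hbot, LieSubmodule.mem_bot] at hmem
  exact hmem

private lemma exists_abelian_ideal [LieAlgebra.IsSolvable L] [Nontrivial L] :
    ∃ N : LieIdeal F L, N ≠ ⊥ ∧ ∀ x ∈ N, ∀ y ∈ N, ⁅x, y⁆ = (0 : L) := by
  classical
  have hex : ∃ k, LieAlgebra.derivedSeries F L k = ⊥ :=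
    LieAlgebra.IsSolvable.solvable F L
  set k₀ := Nat.find hex with hk₀def
  have hk₀ : LieAlgebra.derivedSeries F L k₀ = ⊥ := Nat.find_spec hex
  have hpos : 0 < k₀ := by
    rcases Nat.eq_zero_or_pos k₀ with h0 | h
    · exfalso
      have : LieAlgebra.derivedSeries F L 0 = ⊥ := h0 ▸ hk₀
      simp only [LieAlgebra.derivedSeries_def, LieAlgebra.derivedSeriesOfIdeal_zero] at this
      obtain ⟨x, y, hxy⟩ := exists_pair_ne L
      apply hxy
      have h1 : x ∈ (⊤ : LieIdeal F L) := trivial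
      have h2 : y ∈ (⊤ : LieIdeal F L) := trivial
      rw [this, LieSubmodule.mem_bot] at h1 h2
      rw [h1, h2]
    · exact h
  refine ⟨LieAlgebra.derivedSeries F L (k₀ - 1), Nat.find_min hex (by omega), ?_⟩
  intro x hx y hy
  have hmem : ⁅x, y⁆ ∈ LieAlgebra.derivedSeries F L k₀ := by
    have hsucc : LieAlgebra.derivedSeries F L ((k₀ - 1) + 1) =
        ⁅LieAlgebra.derivedSeries F L (k₀ - 1), LieAlgebra.derivedSeries F L (k₀ - 1)⁆ := by
      simp [LieAlgebra.derivedSeries_def, LieAlgebra.derivedSeriesOfIdeal_succ]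
    rw [← Nat.sub_add_cancel hpos, hsucc]
    exact LieSubmodule.lie_mem_lie hx hy
  rw [hk₀, LieSubmodule.mem_bot] at hmem
  exact hmem

end AuxLie

/-- Two core-free maximal subalgebras `M`, `K` of a finite-dimensional solvable Lie algebra
are conjugate under `id + ad a` for some `a` in the unique minimal ideal `A` of `L`. -/
theorem coreFree_maximal_subalgebras_conjugate (F : Type*) [Field F]
    (L : Type*) [LieRing L] [LieAlgebra F L] [FiniteDimensional F L]
    [LieAlgebra.IsSolvable L]
    (M K : LieSubalgebra F L) (hM : IsCoatom M) (hK : IsCoatom K)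
    (hMcf : ∀ I : LieIdeal F L, (I : Set L) ⊆ (M : Set L) → I = ⊥)
    (hKcf : ∀ I : LieIdeal F L, (I : Set L) ⊆ (K : Set L) → I = ⊥) :
    ∃ A : LieIdeal F L, IsAtom A ∧ (∀ A' : LieIdeal F L, IsAtom A' → A' = A) ∧
      ∃ a ∈ A, (K : Set L) =
        ⇑((1 : Module.End F L) + LieAlgebra.ad F L a) '' (M : Set L) := by
  classical
  -- L is nontrivial
  have hnt : Nontrivial L := by
    rcases subsingleton_or_nontrivial L with hs | hnt
    · exact absurd (by ext x; simpa using (show x ∈ M by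
        rw [Subsingleton.elim x (0:L)]; exact M.zero_mem)) hM.1
    · exact hnt
  obtain ⟨A, hA⟩ := exists_atom_ideal (F := F) (L := L)
  have habel : ∀ a ∈ A, ∀ b ∈ A, ⁅a, b⁆ = (0 : L) := atom_abelian A hA
  have memA : ∀ {x : L}, x ∈ A.toSubmodule ↔ x ∈ A := fun {x} => Iff.rfl
  -- complements
  have hcompl : ∀ (S : LieSubalgebra F L), IsCoatom S →
      (∀ I : LieIdeal F L, (I : Set L) ⊆ (S : Set L) → I = ⊥) →
      A.toSubmodule ⊔ S.toSubmodule = ⊤ ∧ A.toSubmodule ⊓ S.toSubmodule = ⊥ := by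
    intro S hS hScf
    have memS : ∀ {x : L}, x ∈ S.toSubmodule ↔ x ∈ S := fun {x} => Iff.rfl
    have hAnotle : ¬ (A.toSubmodule ≤ S.toSubmodule) := by
      intro h
      exact hA.1 (hScf A (fun x hx => memS.mp (h (memA.mpr hx))))
    -- the sup is a subalgebra
    set T : LieSubalgebra F L :=
      { toSubmodule := A.toSubmodule ⊔ S.toSubmodule
        lie_mem' := by
          intro x y hx hy
          obtain ⟨a, ha, m, hm, rfl⟩ := Submodule.mem_sup.mp hx
          obtain ⟨a', ha', m', hm', rfl⟩ := Submodule.mem_sup.mp hy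
          show ⁅a + m, a' + m'⁆ ∈ A.toSubmodule ⊔ S.toSubmodule
          rw [add_lie, lie_add, lie_add]
          have h1 : ⁅a, a'⁆ ∈ A.toSubmodule := memA.mpr (A.lie_mem (memA.mp ha'))
          have h2 : ⁅a, m'⁆ ∈ A.toSubmodule := by
            rw [← lie_skew]
            exact neg_mem (memA.mpr (A.lie_mem (memA.mp ha)))
          have h3 : ⁅m, a'⁆ ∈ A.toSubmodule := memA.mpr (A.lie_mem (memA.mp ha'))
          have h4 : ⁅m, m'⁆ ∈ S.toSubmodule := memS.mpr (S.lie_mem (memS.mp hm) (memS.mp hm'))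
          exact add_mem (add_mem (Submodule.mem_sup_left h1) (Submodule.mem_sup_left h2))
            (add_mem (Submodule.mem_sup_left h3) (Submodule.mem_sup_right h4)) } with hTdef
    have hST : S < T := by
      refine lt_of_le_of_ne (fun x hx => ?_) (fun hcontra => ?_)
      · show x ∈ A.toSubmodule ⊔ S.toSubmodule
        exact Submodule.mem_sup_right (memS.mpr hx)
      · apply hAnotle
        intro x hx
        have hxT : x ∈ T := Submodule.mem_sup_left hx
        rw [← hcontra] at hxT
        exact memS.mpr hxT
    have hTtop : T = ⊤ := hS.2 T hST
    have hsup : A.toSubmodule ⊔ S.toSubmodule = ⊤ := by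
      have h3 : T.toSubmodule = (⊤ : LieSubalgebra F L).toSubmodule := by rw [hTtop]
      rw [LieSubalgebra.top_toSubmodule] at h3
      exact h3
    refine ⟨hsup, ?_⟩
    -- the intersection is an ideal contained in S
    set I0 : LieIdeal F L :=
      { toSubmodule := A.toSubmodule ⊓ S.toSubmodule
        lie_mem := by
          intro x w hw
          obtain ⟨hwA, hwS⟩ := hw
          have hx : x ∈ A.toSubmodule ⊔ S.toSubmodule := by rw [hsup]; trivial
          obtain ⟨a, ha, m, hm, rfl⟩ := Submodule.mem_sup.mp hx
          show ⁅a + m, w⁆ ∈ A.toSubmodule ⊓ S.toSubmodule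
          rw [add_lie]
          have h0 : ⁅a, w⁆ = 0 := habel a (memA.mp ha) w (memA.mp hwA)
          rw [h0, zero_add]
          exact ⟨memA.mpr (A.lie_mem (memA.mp hwA)),
            memS.mpr (S.lie_mem (memS.mp hm) (memS.mp hwS))⟩ } with hI0def
    have hI0bot : I0 = ⊥ := hScf I0 (fun x hx => memS.mp hx.2)
    ext x
    simp only [Submodule.mem_bot]
    constructor
    · intro hx
      have hxI : x ∈ I0 := hx
      rw [hI0bot, LieSubmodule.mem_bot] at hxI
      exact hxI
    · rintro rfl
      exact zero_mem _
  obtain ⟨hsupM, hinfM⟩ := hcompl M hM hMcf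
  obtain ⟨hsupK, hinfK⟩ := hcompl K hK hKcf
  have memM : ∀ {x : L}, x ∈ M.toSubmodule ↔ x ∈ M := fun {x} => Iff.rfl
  have memK : ∀ {x : L}, x ∈ K.toSubmodule ↔ x ∈ K := fun {x} => Iff.rfl
  -- decomposition w.r.t. M
  have hdecM : ∀ x : L, ∃ a m : L, a ∈ A.toSubmodule ∧ m ∈ M.toSubmodule ∧ x = a + m := by
    intro x
    have hx : x ∈ A.toSubmodule ⊔ M.toSubmodule := by rw [hsupM]; trivial
    obtain ⟨a, ha, m, hm, h⟩ := Submodule.mem_sup.mp hx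
    exact ⟨a, m, ha, hm, h.symm⟩
  -- faithfulness of the action of M on A
  have hcent : ∀ m : L, m ∈ M.toSubmodule → (∀ x ∈ A.toSubmodule, ⁅m, x⁆ = 0) → m = 0 := by
    intro m₁ hm₁ hkill
    set CW : Submodule F L :=
      { carrier := {w : L | w ∈ M.toSubmodule ∧ ∀ x ∈ A.toSubmodule, ⁅w, x⁆ = 0}
        add_mem' := by
          rintro u v ⟨huM, hu⟩ ⟨hvM, hv⟩
          exact ⟨add_mem huM hvM, fun x hx => by rw [add_lie, hu x hx, hv x hx, add_zero]⟩
        zero_mem' := ⟨zero_mem _, fun x hx => zero_lie x⟩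
        smul_mem' := by
          rintro c u ⟨huM, hu⟩
          exact ⟨Submodule.smul_mem _ c huM, fun x hx => by rw [smul_lie, hu x hx, smul_zero]⟩ }
      with hCWdef
    set CI : LieIdeal F L :=
      { toSubmodule := CW
        lie_mem := by
          intro x w hw
          obtain ⟨hwM, hwkill⟩ := hw
          obtain ⟨a, m, ha, hm, rfl⟩ := hdecM x
          show ⁅a + m, w⁆ ∈ CW
          rw [add_lie]
          have h0 : ⁅a, w⁆ = 0 := by
            rw [← lie_skew, hwkill a ha, neg_zero]
          rw [h0, zero_add]
          refine ⟨memM.mpr (M.lie_mem (memM.mp hm) (memM.mp hwM)), ?_⟩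
          intro x hx
          have e : ⁅m, ⁅w, x⁆⁆ = ⁅⁅m, w⁆, x⁆ + ⁅w, ⁅m, x⁆⁆ := leibniz_lie m w x
          have e1 : ⁅w, x⁆ = 0 := hwkill x hx
          have e2 : ⁅w, ⁅m, x⁆⁆ = 0 := hwkill _ (memA.mpr (A.lie_mem (memA.mp hx)))
          rw [e1, lie_zero, e2, add_zero] at e
          exact e.symm } with hCIdef
    have hCbot : CI = ⊥ := hMcf CI (fun x hx => memM.mp hx.1)
    have : m₁ ∈ CI := ⟨hm₁, hkill⟩
    rw [hCbot, LieSubmodule.mem_bot] at this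
    exact this
  -- uniqueness of the minimal ideal
  have huniq : ∀ A' : LieIdeal F L, IsAtom A' → A' = A := by
    intro A' hA'
    by_cases hinter : A ⊓ A' = ⊥
    · exfalso
      have hAA' : ∀ a' ∈ A', ∀ x ∈ A, ⁅a', x⁆ = (0 : L) := by
        intro a' ha' x hx
        have hmem : ⁅a', x⁆ ∈ (⁅A', A⁆ : LieIdeal F L) := LieSubmodule.lie_mem_lie ha' hx
        have hle : (⁅A', A⁆ : LieIdeal F L) ≤ A ⊓ A' := by
          rw [inf_comm]
          exact LieSubmodule.lie_le_inf A' A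
        rw [hinter] at hle
        have := hle hmem
        rwa [LieSubmodule.mem_bot] at this
      have hle : A' ≤ A := by
        intro a' ha'
        obtain ⟨a, m, ha, hm, hdec⟩ := hdecM a'
        have hm0 : m = 0 := by
          apply hcent m hm
          intro x hx
          have h1 : ⁅a', x⁆ = 0 := hAA' a' ha' x (memA.mp hx)
          have h2 : ⁅a, x⁆ = 0 := habel a (memA.mp ha) x (memA.mp hx)
          have : m = a' - a := by rw [hdec]; abel
          rw [this, sub_lie, h1, h2, sub_zero]
        rw [hm0, add_zero] at hdec
        rw [hdec]
        exact memA.mp ha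
      have : A ⊓ A' = A' := inf_eq_right.mpr hle
      rw [hinter] at this
      exact hA'.1 this.symm
    · have h1 : A ⊓ A' = A := by
        rcases lt_or_eq_of_le (inf_le_left (a := A) (b := A')) with h | h
        · exact absurd (hA.2 _ h) hinter
        · exact h
      have h2 : A ⊓ A' = A' := by
        rcases lt_or_eq_of_le (inf_le_right (a := A) (b := A')) with h | h
        · exact absurd (hA'.2 _ h) hinter
        · exact h
      rw [← h2, h1]
  
  -- decomposition w.r.t. K and uniqueness of its A-component
  have hdecK : ∀ x : L, ∃ a k : L, a ∈ A.toSubmodule ∧ k ∈ K.toSubmodule ∧ x = a + k := by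
    intro x
    have hx : x ∈ A.toSubmodule ⊔ K.toSubmodule := by rw [hsupK]; trivial
    obtain ⟨a, ha, k, hk, h⟩ := Submodule.mem_sup.mp hx
    exact ⟨a, k, ha, hk, h.symm⟩
  have huK : ∀ a k a' k' : L, a ∈ A.toSubmodule → k ∈ K.toSubmodule → a' ∈ A.toSubmodule →
      k' ∈ K.toSubmodule → a + k = a' + k' → a = a' := by
    intro a k a' k' ha hk ha' hk' h
    have e : a - a' = k' - k := by
      have : a + k - (a' + k) = a' + k' - (a' + k) := by rw [h]
      calc a - a' = a + k - (a' + k) := by abel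
        _ = a' + k' - (a' + k) := this
        _ = k' - k := by abel
    have hmem : a - a' ∈ A.toSubmodule ⊓ K.toSubmodule :=
      ⟨sub_mem ha ha', by rw [e]; exact sub_mem hk' hk⟩
    rw [hinfK] at hmem
    have : a - a' = 0 := hmem
    exact sub_eq_zero.mp this
  by_cases hMbot : M.toSubmodule = ⊥
  · -- degenerate case `M = 0`, `L = A`
    have hV : A.toSubmodule = ⊤ := by rw [hMbot, sup_bot_eq] at hsupM; exact hsupM
    have hK0 : K.toSubmodule = ⊥ := by rw [hV, top_inf_eq] at hinfK; exact hinfK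
    refine ⟨A, hA, huniq, 0, A.zero_mem, ?_⟩
    have hone : ((1 : Module.End F L) + LieAlgebra.ad F L 0) = 1 := by
      have : LieAlgebra.ad F L (0 : L) = 0 := by simp
      rw [this, add_zero]
    rw [hone]
    have hMset : (M : Set L) = {0} := by
      ext x
      simp only [Set.mem_singleton_iff, SetLike.mem_coe]
      constructor
      · intro hx
        have : x ∈ M.toSubmodule := memM.mpr hx
        rw [hMbot] at this
        simpa using this
      · rintro rfl; exact M.zero_mem
    have hKset : (K : Set L) = {0} := by
      ext x
      simp only [Set.mem_singleton_iff, SetLike.mem_coe]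
      constructor
      · intro hx
        have : x ∈ K.toSubmodule := memK.mpr hx
        rw [hK0] at this
        simpa using this
      · rintro rfl; exact K.zero_mem
    rw [hMset, hKset]
    simp
  · -- main case : `M` is nonzero
    obtain ⟨m₀, hm₀M, hm₀⟩ : ∃ m₀ ∈ M.toSubmodule, m₀ ≠ (0 : L) := by
      by_contra h
      push_neg at h
      apply hMbot
      ext x
      simp only [Submodule.mem_bot]
      exact ⟨fun hx => h x hx, by rintro rfl; exact zero_mem _⟩
    haveI : Nontrivial ↥M := ⟨⟨m₀, memM.mp hm₀M⟩, 0, by simp [Subtype.ext_iff, hm₀]⟩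
    haveI : LieAlgebra.IsSolvable ↥M :=
      Function.Injective.lieAlgebra_isSolvable (f := M.incl) (by
        intro x y h
        exact Subtype.ext (by simpa using h))
    -- a nonzero abelian ideal of M, realised inside L
    obtain ⟨N', hN'ne, hN'ab⟩ := exists_abelian_ideal (F := F) (L := ↥M)
    set NL : Submodule F L := N'.toSubmodule.map (M.incl.toLinearMap) with hNLdef
    have hNLM : ∀ z ∈ NL, z ∈ M.toSubmodule := by
      rintro z ⟨z', hz', rfl⟩
      exact memM.mpr (SetLike.coe_mem z')
    have hNLne : ∃ z ∈ NL, z ≠ (0 : L) := by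
      have : ∃ z' : ↥M, z' ∈ N' ∧ z' ≠ 0 := by
        by_contra h
        push_neg at h
        exact hN'ne ((LieSubmodule.eq_bot_iff N').mpr (fun m hm => h m hm))
      obtain ⟨z', hz', hz'0⟩ := this
      refine ⟨(z' : L), ⟨z', hz', rfl⟩, ?_⟩
      intro h
      exact hz'0 (Subtype.ext h)
    have hNLab : ∀ z ∈ NL, ∀ w ∈ NL, ⁅z, w⁆ = (0 : L) := by
      rintro z ⟨z', hz', rfl⟩ w ⟨w', hw', rfl⟩
      have h0 : ⁅z', w'⁆ = (0 : ↥M) := hN'ab z' hz' w' hw'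
      have : ((⁅z', w'⁆ : ↥M) : L) = ⁅(z' : L), (w' : L)⁆ := LieSubalgebra.coe_bracket M z' w'
      rw [h0] at this
      simpa using this.symm
    have hNLid : ∀ u ∈ M.toSubmodule, ∀ z ∈ NL, ⁅u, z⁆ ∈ NL := by
      intro u hu
      rintro z ⟨z', hz', rfl⟩
      refine ⟨⁅(⟨u, memM.mp hu⟩ : ↥M), z'⁆, N'.lie_mem hz', ?_⟩
      exact LieSubalgebra.coe_bracket M _ _
    -- the action of L on A
    set ρ : L → Module.End F ↥A := fun x => LieModule.toEnd F L ↥A x with hρdef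
    have hρ : ∀ (x : L) (a : ↥A), (↑(ρ x a) : L) = ⁅x, ↑a⁆ := fun x a => rfl
    have hρc : ∀ x y : L, ρ x * ρ y - ρ y * ρ x = ρ ⁅x, y⁆ := by
      intro x y
      letI : LieRing (Module.End F ↥A) := LieRing.ofAssociativeRing
      rw [show ρ ⁅x, y⁆ = LieModule.toEnd F L ↥A ⁅x, y⁆ from rfl, LieHom.map_lie, Ring.lie_def]
    haveI : Nontrivial ↥A := by
      have : ∃ a₁ : L, a₁ ∈ A ∧ a₁ ≠ 0 := by
        by_contra h
        push_neg at h
        exact hA.1 ((LieSubmodule.eq_bot_iff A).mpr (fun m hm => h m hm))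
      obtain ⟨a₁, ha₁, ha₁0⟩ := this
      exact ⟨⟨a₁, ha₁⟩, 0, by simp [Subtype.ext_iff, ha₁0]⟩
    set d : ℕ := finrank F ↥A with hd
    by_cases hnil : ∀ z ∈ NL, ρ z ^ d = 0
    · -- all elements of N act nilpotently : contradiction with faithfulness
      exfalso
      have hstep : ∀ (k : ℕ) (z : L), z ∈ NL → ∀ l : List L, (∀ w ∈ l, w ∈ NL) →
          ∀ a : ↥A, a ≠ 0 → (∀ w ∈ l, ρ w a = 0) → (ρ z ^ k) a = 0 →
          ∃ b : ↥A, b ≠ 0 ∧ (∀ w ∈ l, ρ w b = 0) ∧ ρ z b = 0 := by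
        intro k
        induction k with
        | zero =>
          intro z hz l hl a ha0 hak h
          rw [pow_zero] at h
          exact absurd h ha0
        | succ k ih =>
          intro z hz l hl a ha0 hak h
          by_cases hza : ρ z a = 0
          · exact ⟨a, ha0, hak, hza⟩
          · refine ih z hz l hl (ρ z a) hza ?_ ?_
            · intro w hw
              have hcomm : ρ w * ρ z = ρ z * ρ w := by
                have := hρc w z
                rw [hNLab w (hl w hw) z hz] at this
                have h0 : ρ (0 : L) = 0 := by
                  rw [hρdef]; exact (LieModule.toEnd F L ↥A).map_zero
                rw [h0] at this
                exact sub_eq_zero.mp this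
              calc ρ w (ρ z a) = (ρ w * ρ z) a := rfl
                _ = (ρ z * ρ w) a := by rw [hcomm]
                _ = ρ z (ρ w a) := rfl
                _ = 0 := by rw [hak w hw, map_zero]
            · calc (ρ z ^ k) (ρ z a) = (ρ z ^ k * ρ z) a := rfl
                _ = (ρ z ^ (k + 1)) a := by rw [← pow_succ]
                _ = 0 := h
      have hjoint : ∀ l : List L, (∀ w ∈ l, w ∈ NL) →
          ∃ a : ↥A, a ≠ 0 ∧ ∀ w ∈ l, ρ w a = 0 := by
        intro l
        induction l with
        | nil =>
          intro _
          obtain ⟨a, ha⟩ := exists_ne (0 : ↥A)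
          exact ⟨a, ha, by simp⟩
        | cons z l ihl =>
          intro hl
          obtain ⟨a, ha0, hak⟩ := ihl (fun w hw => hl w (List.mem_cons_of_mem z hw))
          have hzNL : z ∈ NL := hl z List.mem_cons_self
          obtain ⟨b, hb0, hbl, hbz⟩ := hstep d z hzNL l
            (fun w hw => hl w (List.mem_cons_of_mem z hw)) a ha0 hak
            (by rw [hnil z hzNL]; rfl)
          refine ⟨b, hb0, ?_⟩
          intro w hw
          rcases List.mem_cons.mp hw with rfl | hw
          · exact hbz
          · exact hbl w hw
      obtain ⟨t, ht⟩ := (IsNoetherian.noetherian NL : NL.FG)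
      have htmem : ∀ w ∈ t.toList, w ∈ NL := by
        intro w hw
        rw [← ht]
        exact Submodule.subset_span (by simpa using hw)
      obtain ⟨a, ha0, hak⟩ := hjoint t.toList htmem
      have hall : ∀ z ∈ NL, ρ z a = 0 := by
        letI : LieRing (Module.End F ↥A) := LieRing.ofAssociativeRing
        have hev : NL ≤ LinearMap.ker ((LieModule.toEnd F L ↥A).toLinearMap.flip a) := by
          rw [← ht, Submodule.span_le]
          intro w hw
          have : w ∈ t.toList := by simpa using hw
          exact hak w this
        intro z hz
        exact hev hz
      set JW : Submodule F L :=
        { carrier := {x : L | x ∈ A.toSubmodule ∧ ∀ z ∈ NL, ⁅z, x⁆ = 0}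
          add_mem' := by
            rintro u v ⟨huA, hu⟩ ⟨hvA, hv⟩
            exact ⟨add_mem huA hvA, fun z hz => by rw [lie_add, hu z hz, hv z hz, add_zero]⟩
          zero_mem' := ⟨zero_mem _, fun z hz => lie_zero z⟩
          smul_mem' := by
            rintro c u ⟨huA, hu⟩
            exact ⟨Submodule.smul_mem _ c huA, fun z hz => by
              rw [lie_smul, hu z hz, smul_zero]⟩ } with hJWdef
      set JI : LieIdeal F L :=
        { toSubmodule := JW
          lie_mem := by
            intro x w hw
            obtain ⟨hwA, hwkill⟩ := hw
            obtain ⟨a', m, ha', hm, rfl⟩ := hdecM x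
            show ⁅a' + m, w⁆ ∈ JW
            rw [add_lie]
            have h0 : ⁅a', w⁆ = 0 := habel a' (memA.mp ha') w (memA.mp hwA)
            rw [h0, zero_add]
            refine ⟨memA.mpr (A.lie_mem (memA.mp hwA)), ?_⟩
            intro z hz
            have e : ⁅z, ⁅m, w⁆⁆ = ⁅⁅z, m⁆, w⁆ + ⁅m, ⁅z, w⁆⁆ := leibniz_lie z m w
            have e1 : ⁅z, w⁆ = 0 := hwkill z hz
            have e2 : ⁅z, m⁆ ∈ NL := by
              have hmz : ⁅m, z⁆ ∈ NL := hNLid m hm z hz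
              have : -⁅m, z⁆ ∈ NL := neg_mem hmz
              rwa [lie_skew z m] at this
            have e3 : ⁅⁅z, m⁆, w⁆ = 0 := hwkill _ e2
            rw [e1, lie_zero, add_zero, e3] at e
            exact e } with hJIdef
      have hJne : JI ≠ ⊥ := by
        intro hbot
        have hmem : (↑a : L) ∈ JI := by
          refine ⟨memA.mpr (SetLike.coe_mem a), ?_⟩
          intro z hz
          have := hall z hz
          rw [← hρ z a, this]
          rfl
        rw [hbot, LieSubmodule.mem_bot] at hmem
        exact ha0 (Subtype.ext hmem)
      have hJle : JI ≤ A := fun x hx => memA.mp hx.1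
      have hJA : JI = A := by
        rcases lt_or_eq_of_le hJle with h | h
        · exact absurd (hA.2 _ h) hJne
        · exact h
      obtain ⟨z₀, hz₀NL, hz₀⟩ := hNLne
      apply hz₀
      apply hcent z₀ (hNLM z₀ hz₀NL)
      intro x hx
      have hxJ : x ∈ JI := by rw [hJA]; exact memA.mp hx
      exact hxJ.2 z₀ hz₀NL
    · -- some z in N acts invertibly on A
      push_neg at hnil
      obtain ⟨z, hzNL, hznil⟩ := hnil
      have hzM : z ∈ M.toSubmodule := hNLM z hzNL
      set TT : Module.End F ↥A := ρ z with hTTdef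
      -- the kernel of TT ^ d corresponds to an ideal of L contained in A
      set JW2 : Submodule F L := (LinearMap.ker (TT ^ d)).map (A.incl : ↥A →ₗ[F] L) with hJW2def
      have hJW2mem : ∀ x : L, x ∈ JW2 ↔ ∃ v : ↥A, (TT ^ d) v = 0 ∧ (↑v : L) = x := by
        intro x
        constructor
        · rintro ⟨v, hv, rfl⟩
          exact ⟨v, hv, rfl⟩
        · rintro ⟨v, hv, rfl⟩
          exact ⟨v, hv, rfl⟩
      set JI2 : LieIdeal F L :=
        { toSubmodule := JW2
          lie_mem := by
            intro x w hw
            obtain ⟨v, hv, rfl⟩ := (hJW2mem w).mp hw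
            obtain ⟨a', m, ha', hm, rfl⟩ := hdecM x
            refine (hJW2mem _).mpr ?_
            have h0 : ⁅a', (↑v : L)⁆ = 0 :=
              habel a' (memA.mp ha') _ (SetLike.coe_mem v)
            refine ⟨ρ m v, ?_, ?_⟩
            · -- stability of the kernel
              have hcm : TT * ρ ⁅m, z⁆ = ρ ⁅m, z⁆ * TT := by
                have h1 := hρc z ⁅m, z⁆
                have hzz : ⁅z, ⁅m, z⁆⁆ = 0 := hNLab z hzNL ⁅m, z⁆ (hNLid m hm z hzNL)
                rw [hzz] at h1
                have h00 : ρ (0 : L) = 0 := (LieModule.toEnd F L ↥A).map_zero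
                rw [h00] at h1
                exact sub_eq_zero.mp h1
              exact ker_pow_stable (ρ m) TT (ρ ⁅m, z⁆) (hρc m z) hcm v hv
            · rw [add_lie, h0, zero_add]
              exact (hρ m v).symm
          } with hJI2def
      have hJ2le : JI2 ≤ A := by
        intro x hx
        obtain ⟨v, hv, rfl⟩ := (hJW2mem x).mp hx
        exact SetLike.coe_mem v
      have hJ2ne : JI2 ≠ A := by
        intro hcontra
        apply hznil
        ext v
        have hvJ : (↑v : L) ∈ JI2 := by rw [hcontra]; exact SetLike.coe_mem v
        obtain ⟨v', hv', hvv⟩ := (hJW2mem _).mp hvJ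
        have : v' = v := Subtype.ext hvv
        rw [this] at hv'
        simp [hv']
      have hJ2bot : JI2 = ⊥ := hA.2 JI2 (lt_of_le_of_ne hJ2le hJ2ne)
      have hTinj : Function.Injective TT := by
        rw [← LinearMap.ker_eq_bot]
        rw [eq_bot_iff]
        intro v hv
        have hvd : (TT ^ d) v = 0 := by
          have hd1 : 0 < d := finrank_pos
          have e : d = (d - 1) + 1 := by omega
          rw [e, pow_succ]
          calc (TT ^ (d-1) * TT) v = (TT ^ (d-1)) (TT v) := rfl
            _ = 0 := by rw [LinearMap.mem_ker.mp hv, map_zero]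
        have : (↑v : L) ∈ JI2 := (hJW2mem _).mpr ⟨v, hvd, rfl⟩
        rw [hJ2bot, LieSubmodule.mem_bot] at this
        exact Submodule.mem_bot _ |>.mpr (Subtype.ext this)
      have hTsurj : Function.Surjective TT := LinearMap.injective_iff_surjective.mp hTinj
      have hTinjL : ∀ w : L, w ∈ A.toSubmodule → ⁅z, w⁆ = 0 → w = 0 := by
        intro w hw hzw
        have h1 : TT ⟨w, memA.mp hw⟩ = 0 := by
          apply Subtype.ext
          rw [show ((TT ⟨w, memA.mp hw⟩ : ↥A) : L) = ⁅z, w⁆ from rfl, hzw]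
          rfl
        have h2 : TT ⟨w, memA.mp hw⟩ = TT 0 := by rw [h1, map_zero]
        have := hTinj h2
        exact congrArg Subtype.val this
      -- the cocycle map φ
      choose aK kK haK hkK hxK using hdecK
      set φ : L → L := fun m => -(aK m) with hφdef
      have hφA : ∀ m : L, φ m ∈ A.toSubmodule := fun m => neg_mem (haK m)
      have hφK : ∀ m : L, m + φ m ∈ K.toSubmodule := by
        intro m
        have e2 : kK m = m - aK m := eq_sub_of_add_eq' (hxK m).symm
        have e : m + φ m = kK m := by
          show m + -(aK m) = kK m
          rw [e2]
          abel
        rw [e]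
        exact hkK m
      have hφuniq : ∀ m w : L, w ∈ A.toSubmodule → m + w ∈ K.toSubmodule → φ m = w := by
        intro m w hw hmw
        have h1 : aK m + kK m = (-w) + (m + w) := by rw [← hxK m]; abel
        have h2 := huK (aK m) (kK m) (-w) (m + w) (haK m) (hkK m) (neg_mem hw) hmw h1
        show -(aK m) = w
        rw [h2, neg_neg]
      have hcocy : ∀ m ∈ M.toSubmodule, ∀ m' ∈ M.toSubmodule,
          φ ⁅m, m'⁆ = ⁅m, φ m'⁆ - ⁅m', φ m⁆ := by
        intro m hm m' hm'
        have hbr : ⁅m + φ m, m' + φ m'⁆ ∈ K.toSubmodule :=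
          memK.mpr (K.lie_mem (memK.mp (hφK m)) (memK.mp (hφK m')))
        have hexp : ⁅m + φ m, m' + φ m'⁆ = ⁅m, m'⁆ + (⁅m, φ m'⁆ - ⁅m', φ m⁆) := by
          rw [add_lie, lie_add, lie_add]
          have h00 : ⁅φ m, φ m'⁆ = 0 := habel _ (memA.mp (hφA m)) _ (memA.mp (hφA m'))
          rw [h00, ← lie_skew (φ m) m']
          abel
        have hcA : ⁅m, φ m'⁆ - ⁅m', φ m⁆ ∈ A.toSubmodule :=
          sub_mem (memA.mpr (A.lie_mem (memA.mp (hφA m'))))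
            (memA.mpr (A.lie_mem (memA.mp (hφA m))))
        exact hφuniq ⁅m, m'⁆ _ hcA (by rw [← hexp]; exact hbr)
      have hφ0 : φ 0 = 0 := hφuniq 0 0 (zero_mem _) (by rw [add_zero]; exact zero_mem _)
      -- the conjugating element
      obtain ⟨a₀, ha₀⟩ := hTsurj ⟨φ z, memA.mp (hφA z)⟩
      have ha₀' : ⁅z, (↑a₀ : L)⁆ = φ z := by
        calc ⁅z, (↑a₀ : L)⁆ = ↑(TT a₀) := rfl
          _ = φ z := by rw [ha₀]
      have hclaim1 : ∀ n ∈ NL, φ n = ⁅n, (↑a₀ : L)⁆ := by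
        intro n hn
        have hnM := hNLM n hn
        have hc := hcocy n hnM z hzM
        have hnz : ⁅n, z⁆ = 0 := hNLab n hn z hzNL
        rw [hnz, hφ0] at hc
        have hy : ⁅n, φ z⁆ = ⁅z, φ n⁆ := sub_eq_zero.mp hc.symm
        have e : ⁅n, φ z⁆ = ⁅z, ⁅n, (↑a₀ : L)⁆⁆ := by
          rw [← ha₀', leibniz_lie n z (↑a₀ : L), hnz, zero_lie, zero_add]
        have e2 : ⁅z, φ n - ⁅n, (↑a₀ : L)⁆⁆ = 0 := by
          rw [lie_sub, ← hy, e, sub_self]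
        have hmem : φ n - ⁅n, (↑a₀ : L)⁆ ∈ A.toSubmodule :=
          sub_mem (hφA n) (memA.mpr (A.lie_mem (SetLike.coe_mem a₀)))
        exact sub_eq_zero.mp (hTinjL _ hmem e2)
      have hclaim2 : ∀ u ∈ M.toSubmodule, φ u = ⁅u, (↑a₀ : L)⁆ := by
        intro u hu
        have hc := hcocy u hu z hzM
        have huz : ⁅u, z⁆ ∈ NL := hNLid u hu z hzNL
        rw [hclaim1 _ huz] at hc
        have e : ⁅u, φ z⁆ = ⁅⁅u, z⁆, (↑a₀ : L)⁆ + ⁅z, ⁅u, (↑a₀ : L)⁆⁆ := by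
          rw [← ha₀', leibniz_lie]
        rw [e] at hc
        have hc' : ⁅⁅u, z⁆, (↑a₀ : L)⁆ =
            ⁅⁅u, z⁆, (↑a₀ : L)⁆ + (⁅z, ⁅u, (↑a₀ : L)⁆⁆ - ⁅z, φ u⁆) := by
          conv_lhs => rw [hc]
          abel
        have h4 : ⁅z, ⁅u, (↑a₀ : L)⁆⁆ - ⁅z, φ u⁆ = 0 := left_eq_add.mp hc'
        have e2 : ⁅z, φ u - ⁅u, (↑a₀ : L)⁆⁆ = 0 := by
          have h5 : ⁅z, φ u⁆ - ⁅z, ⁅u, (↑a₀ : L)⁆⁆ =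
              -(⁅z, ⁅u, (↑a₀ : L)⁆⁆ - ⁅z, φ u⁆) := by abel
          rw [lie_sub, h5, h4, neg_zero]
        have hmem : φ u - ⁅u, (↑a₀ : L)⁆ ∈ A.toSubmodule :=
          sub_mem (hφA u) (memA.mpr (A.lie_mem (SetLike.coe_mem a₀)))
        exact sub_eq_zero.mp (hTinjL _ hmem e2)
      -- conclusion
      have hkey : ∀ m : L, m ∈ M.toSubmodule →
          ((1 : Module.End F L) + LieAlgebra.ad F L (-(↑a₀ : L))) m = m + φ m := by
        intro m hm
        have : ((1 : Module.End F L) + LieAlgebra.ad F L (-(↑a₀ : L))) m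
            = m + ⁅-(↑a₀ : L), m⁆ := by
          simp [LieAlgebra.ad_apply]
        rw [this, neg_lie, lie_skew, hclaim2 m hm]
      refine ⟨A, hA, huniq, -(↑a₀ : L), neg_mem (SetLike.coe_mem a₀), ?_⟩
      ext x
      simp only [Set.mem_image, SetLike.mem_coe]
      constructor
      · intro hxK
        obtain ⟨a', m, ha', hm, rfl⟩ := hdecM x
        refine ⟨m, memM.mp hm, ?_⟩
        have hxm : φ m = a' := by
          apply hφuniq m a' ha'
          rw [add_comm]
          exact memK.mpr hxK
        rw [hkey m hm, hxm, add_comm]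
      · rintro ⟨m, hmM, rfl⟩
        rw [hkey m (memM.mpr hmM)]
        exact memK.mp (hφK m)
end

section
/- Let L be a finite-dimensional solvable Lie algebra with a core-free maximal subalgebra M. Then L has a unique minimal ideal A, A is abelian, C_L(A) = A, and L = A ⊕ M (internal direct sum of vector spaces, with M a subalgebra and A an ideal). -/
/-- If a finite-dimensional solvable Lie algebra `L` has a core-free maximal subalgebra `M`,
then `L` has a unique minimal ideal `A`, which is abelian and self-centralising, and
`L = A ⊕ M`. -/
theorem coreFree_maximal_subalgebra_structure (F : Type*) [Field F]
    (L : Type*) [LieRing L] [LieAlgebra F L] [FiniteDimensional F L]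
    [LieAlgebra.IsSolvable L]
    (M : LieSubalgebra F L) (hM : IsCoatom M)
    (hMcf : ∀ I : LieIdeal F L, (I : Set L) ⊆ (M : Set L) → I = ⊥) :
    ∃ A : LieIdeal F L, IsAtom A ∧ (∀ A' : LieIdeal F L, IsAtom A' → A' = A) ∧
      (∀ a ∈ A, ∀ b ∈ A, ⁅a, b⁆ = 0) ∧
      (∀ x : L, (∀ a ∈ A, ⁅x, a⁆ = 0) ↔ x ∈ A) ∧
      (∀ x : L, ∃ a ∈ A, ∃ m ∈ M, x = a + m) ∧
      (∀ x : L, x ∈ A → x ∈ M → x = 0) := by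
  -- L is nontrivial
  have hnt : Nontrivial L := by
    by_contra h
    have hs : Subsingleton L := not_nontrivial_iff_subsingleton.mp h
    exact hM.1 (by
      ext x
      simp only [LieSubalgebra.mem_top, iff_true]
      have : x = 0 := Subsingleton.elim x 0
      rw [this]; exact M.zero_mem)
  -- obtain a minimal ideal A
  obtain ⟨A, hA, -⟩ :=
    (IsAtomic.eq_bot_or_exists_atom_le (⊤ : LieIdeal F L)).resolve_left top_ne_bot
  -- A is abelian
  have hAA : ⁅A, A⁆ = ⊥ := by
    have h1 : ⁅A, A⁆ ≤ A := LieSubmodule.lie_le_left A A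
    rcases lt_or_eq_of_le h1 with h | h
    · exact hA.2 _ h
    · exfalso
      obtain ⟨k, hk⟩ := LieAlgebra.IsSolvable.solvable (R := F) (L := L)
      have key : ∀ k, A ≤ LieAlgebra.derivedSeries F L k := by
        intro k
        induction k with
        | zero => exact le_top
        | succ k ih =>
          rw [LieAlgebra.derivedSeries_def, LieAlgebra.derivedSeriesOfIdeal_succ]
          calc A = ⁅A, A⁆ := h.symm
            _ ≤ _ := LieSubmodule.mono_lie ih ih
      have := key k
      rw [hk, le_bot_iff] at this
      exact hA.1 this
  have habelian : ∀ a ∈ A, ∀ b ∈ A, ⁅a, b⁆ = 0 := by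
    intro a ha b hb
    have : ⁅a, b⁆ ∈ ⁅A, A⁆ := LieSubmodule.lie_mem_lie ha hb
    rw [hAA] at this
    exact (LieSubmodule.mem_bot _).mp this
  -- A is not contained in M
  have hAM : ¬((A : Set L) ⊆ (M : Set L)) := fun h => hA.1 (hMcf A h)
  obtain ⟨z, hzA, hzM⟩ := Set.not_subset.mp hAM
  -- the submodule A + M is a subalgebra containing M strictly, hence equals L
  set p : Submodule F L := A.toSubmodule ⊔ M.toSubmodule with hp
  have hmemp : ∀ x : L, x ∈ p ↔ ∃ a ∈ A, ∃ m ∈ M, x = a + m := by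
    intro x
    rw [hp, Submodule.mem_sup]
    constructor
    · rintro ⟨a, ha, m, hm, rfl⟩; exact ⟨a, ha, m, hm, rfl⟩
    · rintro ⟨a, ha, m, hm, rfl⟩; exact ⟨a, ha, m, hm, rfl⟩
  have hpclosed : ∀ x y : L, x ∈ p → y ∈ p → ⁅x, y⁆ ∈ p := by
    intro x y hx hy
    obtain ⟨a, ha, m, hm, rfl⟩ := (hmemp x).mp hx
    obtain ⟨a', ha', m', hm', rfl⟩ := (hmemp y).mp hy
    have hAp : A.toSubmodule ≤ p := le_sup_left
    have hMp : M.toSubmodule ≤ p := le_sup_right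
    rw [add_lie, lie_add, lie_add]
    refine p.add_mem (p.add_mem (hAp ?_) (hAp ?_)) (p.add_mem (hAp ?_) (hMp ?_))
    · exact A.lie_mem ha'
    · rw [← lie_skew]
      exact Submodule.neg_mem _ (A.lie_mem ha)
    · exact A.lie_mem ha'
    · exact M.lie_mem hm hm'
  let S : LieSubalgebra F L := { p with lie_mem' := fun hx hy => hpclosed _ _ hx hy }
  have hMS : M < S := by
    constructor
    · intro x hx
      exact (le_sup_right : M.toSubmodule ≤ p) hx
    · intro hle
      exact hzM (hle ((le_sup_left : A.toSubmodule ≤ p) hzA))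
  have hStop : S = ⊤ := hM.2 S hMS
  have hsum : ∀ x : L, ∃ a ∈ A, ∃ m ∈ M, x = a + m := by
    intro x
    have : x ∈ S := hStop ▸ trivial
    exact (hmemp x).mp this
  -- A ∩ M = 0
  have hint : ∀ x : L, x ∈ A → x ∈ M → x = 0 := by
    have hq : ∀ (x y : L), y ∈ A.toSubmodule ⊓ M.toSubmodule →
        ⁅x, y⁆ ∈ A.toSubmodule ⊓ M.toSubmodule := by
      intro x y hy
      obtain ⟨a, ha, m, hm, rfl⟩ := hsum x
      rw [add_lie, habelian a ha y hy.1, zero_add]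
      exact ⟨A.lie_mem hy.1, M.lie_mem hm hy.2⟩
    let N : LieIdeal F L :=
      { A.toSubmodule ⊓ M.toSubmodule with lie_mem := fun {x y} hy => hq x y hy }
    have hN : N = ⊥ := hMcf N (fun y hy => hy.2)
    intro x hx hx'
    have : x ∈ N := ⟨hx, hx'⟩
    rw [hN] at this
    exact (LieSubmodule.mem_bot _).mp this
  -- centraliser of A equals A
  have hcent : ∀ x : L, (∀ a ∈ A, ⁅x, a⁆ = 0) ↔ x ∈ A := by
    let C : Submodule F L :=
      { carrier := { x | ∀ a ∈ A, ⁅x, a⁆ = 0 }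
        add_mem' := fun {x y} hx hy a ha => by rw [add_lie, hx a ha, hy a ha, add_zero]
        zero_mem' := fun a _ => zero_lie a
        smul_mem' := fun c x hx a ha => by rw [smul_lie, hx a ha, smul_zero] }
    have hCmem : ∀ x : L, x ∈ C ↔ ∀ a ∈ A, ⁅x, a⁆ = 0 := fun _ => Iff.rfl
    -- C is an ideal
    have hClie : ∀ x y : L, y ∈ C → ⁅x, y⁆ ∈ C := by
      intro x y hy a ha
      have hxa : ⁅x, a⁆ ∈ A := A.lie_mem ha
      rw [lie_lie, hy a ha, lie_zero, hy _ hxa, sub_zero]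
    -- C ∩ M is an ideal contained in M
    have hD : ∀ (x y : L), y ∈ C ⊓ M.toSubmodule → ⁅x, y⁆ ∈ C ⊓ M.toSubmodule := by
      intro x y hy
      obtain ⟨a, ha, m, hm, rfl⟩ := hsum x
      have h1 : ⁅a, y⁆ = 0 := by
        rw [← lie_skew, hy.1 a ha, neg_zero]
      rw [add_lie, h1, zero_add]
      exact ⟨hClie m y hy.1, M.lie_mem hm hy.2⟩
    let N' : LieIdeal F L :=
      { C ⊓ M.toSubmodule with lie_mem := fun {x y} hy => hD x y hy }
    have hN' : N' = ⊥ := hMcf N' (fun y hy => hy.2)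
    intro x
    constructor
    · intro hx
      obtain ⟨a, ha, m, hm, rfl⟩ := hsum x
      have hmC : m ∈ C := by
        intro b hb
        have haC : ⁅a, b⁆ = 0 := habelian a ha b hb
        have := hx b hb
        rw [add_lie, haC, zero_add] at this
        exact this
      have : m ∈ N' := ⟨hmC, hm⟩
      rw [hN'] at this
      have hm0 : m = 0 := (LieSubmodule.mem_bot _).mp this
      rw [hm0, add_zero]
      exact ha
    · intro hx a ha
      exact habelian x hx a ha
  -- uniqueness of the minimal ideal
  refine ⟨A, hA, ?_, habelian, hcent, hsum, hint⟩
  intro A' hA'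
  by_contra hne
  have hle : ¬A' ≤ A := by
    intro hle
    rcases lt_or_eq_of_le hle with h | h
    · exact hA'.1 (hA.2 _ h)
    · exact hne h
  have hinf : A' ⊓ A = ⊥ := by
    rcases lt_or_eq_of_le (inf_le_left : A' ⊓ A ≤ A') with h | h
    · exact hA'.2 _ h
    · exact absurd (h ▸ inf_le_right : A' ≤ A) hle
  have : A' ≤ A := by
    intro x hx
    refine (hcent x).mp ?_
    intro a ha
    have : ⁅x, a⁆ ∈ A' ⊓ A := LieSubmodule.lie_le_inf A' A (LieSubmodule.lie_mem_lie hx ha)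
    rw [hinf] at this
    exact (LieSubmodule.mem_bot _).mp this
  exact hle this
end

section
/- Let L be a finite-dimensional solvable Lie algebra with chief series 0 = L₀ < L₁ < … < Lₙ = L, and let M be a maximal subalgebra of L. Then there exists an index k, 0 ≤ k ≤ n−1, such that L_k ⊆ M, L_{k+1} ⊄ M, L = M + L_{k+1}, and M ∩ L_{k+1} = L_k (i.e. M complements the chief factor L_{k+1}/L_k). -/
/-- Let `0 = L₀ < L₁ < … < Lₙ = L` be a chief series of a finite-dimensional solvable Lie
algebra `L` and `M` a maximal subalgebra.  Then there is `k < n` with `L_k ⊆ M`,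
`L_{k+1} ⊄ M`, `L = M + L_{k+1}` and `M ∩ L_{k+1} = L_k`, i.e. `M` complements the chief
factor `L_{k+1}/L_k`. -/
theorem maximal_subalgebra_complements_chief_factor (F : Type*) [Field F]
    (L : Type*) [LieRing L] [LieAlgebra F L] [FiniteDimensional F L]
    [LieAlgebra.IsSolvable L]
    (n : ℕ) (C : ℕ → LieIdeal F L)
    (h0 : C 0 = ⊥) (hn : C n = ⊤)
    (hlt : ∀ k < n, C k < C (k + 1))
    (hchief : ∀ k < n, ∀ I : LieIdeal F L, C k ≤ I → I ≤ C (k + 1) → I = C k ∨ I = C (k + 1))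
    (M : LieSubalgebra F L) (hM : IsCoatom M) :
    ∃ k < n, ((C k : Set L) ⊆ (M : Set L)) ∧ ¬ ((C (k + 1) : Set L) ⊆ (M : Set L)) ∧
      (∀ x : L, ∃ m ∈ M, ∃ a ∈ C (k + 1), x = m + a) ∧
      {z : L | z ∈ M ∧ z ∈ C (k + 1)} = (C k : Set L) := by
  -- abbreviation
  set P : ℕ → Prop := fun j => ((C j : Set L) ⊆ (M : Set L)) with hP
  have hP0 : P 0 := by
    intro x hx
    rw [h0] at hx
    simp only [SetLike.mem_coe, LieSubmodule.mem_bot] at hx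
    subst hx
    exact M.zero_mem
  have hPn : ¬ P n := by
    intro h
    apply hM.1
    apply le_antisymm le_top
    intro x _
    exact h (by simp [hn])
  -- find k with P k and ¬ P (k+1)
  obtain ⟨k, hkn, hPk, hPk1⟩ : ∃ k < n, P k ∧ ¬ P (k + 1) := by
    by_contra h
    push_neg at h
    have key : ∀ j, j ≤ n → P j := by
      intro j
      induction j with
      | zero => intro _; exact hP0
      | succ j ih =>
        intro hj
        exact h j (by omega) (ih (by omega))
    exact hPn (key n le_rfl)
  refine ⟨k, hkn, hPk, hPk1, ?_⟩
  have hCle : C k ≤ C (k + 1) := (hlt k hkn).le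
  -- The chief factor is abelian: ⁅C (k+1), C (k+1)⁆ ≤ C k
  have habelian : ⁅C (k + 1), C (k + 1)⁆ ≤ C k := by
    have hsub : ⁅C (k + 1), C (k + 1)⁆ ≤ C (k + 1) := LieSubmodule.lie_le_left _ _
    have := hchief k hkn (C k ⊔ ⁅C (k + 1), C (k + 1)⁆) le_sup_left
      (sup_le hCle hsub)
    rcases this with h | h
    · calc ⁅C (k + 1), C (k + 1)⁆ ≤ C k ⊔ ⁅C (k + 1), C (k + 1)⁆ := le_sup_right
        _ = C k := h
    · -- contradiction with solvability
      exfalso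
      have key : ∀ m : ℕ, C (k + 1) ≤ C k ⊔ LieAlgebra.derivedSeriesOfIdeal F L m (C (k + 1)) := by
        intro m
        induction m with
        | zero => simp [LieAlgebra.derivedSeriesOfIdeal_zero]
        | succ m ih =>
          have hb : ⁅C (k + 1), C (k + 1)⁆ ≤
              C k ⊔ LieAlgebra.derivedSeriesOfIdeal F L (m + 1) (C (k + 1)) := by
            calc ⁅C (k + 1), C (k + 1)⁆
                ≤ ⁅C k ⊔ LieAlgebra.derivedSeriesOfIdeal F L m (C (k + 1)),
                    C k ⊔ LieAlgebra.derivedSeriesOfIdeal F L m (C (k + 1))⁆ :=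
                  LieSubmodule.mono_lie ih ih
              _ ≤ C k ⊔ LieAlgebra.derivedSeriesOfIdeal F L (m + 1) (C (k + 1)) := by
                  rw [LieSubmodule.sup_lie, LieSubmodule.lie_sup, LieSubmodule.lie_sup,
                    LieAlgebra.derivedSeriesOfIdeal_succ]
                  refine sup_le (sup_le ?_ ?_) (sup_le ?_ ?_)
                  · exact le_trans (LieSubmodule.lie_le_left _ _) le_sup_left
                  · exact le_trans (LieSubmodule.lie_le_left _ _) le_sup_left
                  · exact le_trans (LieSubmodule.lie_le_right _ _) le_sup_left
                  · exact le_sup_right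
          calc C (k + 1) = C k ⊔ ⁅C (k + 1), C (k + 1)⁆ := h.symm
            _ ≤ C k ⊔ (C k ⊔ LieAlgebra.derivedSeriesOfIdeal F L (m + 1) (C (k + 1))) :=
                sup_le_sup_left hb _
            _ = C k ⊔ LieAlgebra.derivedSeriesOfIdeal F L (m + 1) (C (k + 1)) := by
                rw [← sup_assoc, sup_idem]
      obtain ⟨m, hm⟩ := LieAlgebra.IsSolvable.solvable F L
      have hbot : LieAlgebra.derivedSeriesOfIdeal F L m (C (k + 1)) = ⊥ := by
        apply le_bot_iff.mp
        calc LieAlgebra.derivedSeriesOfIdeal F L m (C (k + 1))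
            ≤ LieAlgebra.derivedSeriesOfIdeal F L m ⊤ :=
              LieAlgebra.derivedSeriesOfIdeal_mono le_top m
          _ = ⊥ := hm
      have := key m
      rw [hbot, sup_bot_eq] at this
      exact (hlt k hkn).not_ge this
  -- The subalgebra M + C (k+1)
  set T : LieSubalgebra F L :=
    { toSubmodule := M.toSubmodule ⊔ (C (k + 1) : Submodule F L)
      lie_mem' := by
        intro x y hx hy
        obtain ⟨m, hm, a, ha, rfl⟩ := Submodule.mem_sup.mp hx
        obtain ⟨m', hm', a', ha', rfl⟩ := Submodule.mem_sup.mp hy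
        have : ⁅m + a, m' + a'⁆ =
            ⁅m, m'⁆ + (⁅m, a'⁆ + ⁅a, m'⁆ + ⁅a, a'⁆) := by
          simp only [add_lie, lie_add]; abel
        rw [this]
        apply Submodule.add_mem
        · exact Submodule.mem_sup_left (M.lie_mem hm hm')
        · apply Submodule.mem_sup_right
          refine Submodule.add_mem _ (Submodule.add_mem _ ?_ ?_) ?_
          · exact (C (k + 1)).lie_mem ha'
          · have : ⁅a, m'⁆ = -⁅m', a⁆ := by rw [lie_skew]
            rw [this]
            exact Submodule.neg_mem _ ((C (k + 1)).lie_mem ha)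
          · exact (C (k + 1)).lie_mem ha' } with hT
  have hMT : M < T := by
    constructor
    · intro x hx
      exact Submodule.mem_sup_left hx
    · intro habs
      apply hPk1
      intro x hx
      exact habs (Submodule.mem_sup_right hx)
  have hTtop : T = ⊤ := hM.2 T hMT
  have hdecomp : ∀ x : L, ∃ m ∈ M, ∃ a ∈ C (k + 1), x = m + a := by
    intro x
    have hx : x ∈ T := by rw [hTtop]; trivial
    obtain ⟨m, hm, a, ha, hma⟩ := Submodule.mem_sup.mp hx
    exact ⟨m, hm, a, ha, hma.symm⟩
  refine ⟨hdecomp, ?_⟩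
  -- The intersection M ∩ C (k+1) is an ideal
  have hCkle : C k ≤ { x : L | x ∈ M ∧ x ∈ C (k + 1) } := by
    intro x hx
    exact ⟨hPk hx, hCle hx⟩
  set N : LieIdeal F L :=
    { carrier := { x : L | x ∈ M ∧ x ∈ C (k + 1) }
      add_mem' := fun ha hb => ⟨M.add_mem ha.1 hb.1, (C (k + 1)).add_mem ha.2 hb.2⟩
      zero_mem' := ⟨M.zero_mem, (C (k + 1)).zero_mem⟩
      smul_mem' := fun c x hx => ⟨M.smul_mem c hx.1, (C (k + 1)).smul_mem c hx.2⟩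
      lie_mem := by
        intro x z hz
        obtain ⟨m, hm, a, ha, rfl⟩ := hdecomp x
        have h1 : ⁅m + a, z⁆ = ⁅m, z⁆ + ⁅a, z⁆ := add_lie m a z
        rw [h1]
        have hmz : ⁅m, z⁆ ∈ { x : L | x ∈ M ∧ x ∈ C (k + 1) } :=
          ⟨M.lie_mem hm hz.1, (C (k + 1)).lie_mem hz.2⟩
        have haz : ⁅a, z⁆ ∈ { x : L | x ∈ M ∧ x ∈ C (k + 1) } := by
          apply hCkle
          exact habelian (LieSubmodule.lie_mem_lie ha hz.2)
        exact ⟨M.add_mem hmz.1 haz.1, (C (k + 1)).add_mem hmz.2 haz.2⟩ } with hN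
  have hNk : N = C k ∨ N = C (k + 1) := by
    apply hchief k hkn
    · exact hCkle
    · intro x hx
      exact hx.2
  rcases hNk with h | h
  · ext x
    constructor
    · intro hx
      have : x ∈ N := hx
      rw [h] at this
      exact this
    · intro hx
      have : x ∈ N := by rw [h]; exact hx
      exact this
  · exfalso
    apply hPk1
    intro x hx
    have : x ∈ N := by rw [h]; exact hx
    exact this.1
end
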